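/- arXiv:1607.00419 — 8 statements merged into one kernel-verified Lean document; each statement's English description precedes it below -/
import Mathlib

section
/- Let x satisfy x(n+1) = H(n+1) + ∑_{j=0}^{n} k(n-j) f(x(j)) for n ≥ 0 with x(0) = ξ. If f is continuous and sublinear, k is absolutely summable, and H*(n) := max_{1 ≤ j ≤ n} |H(j)| converges to a finite limit, then x*(n) := max_{0 ≤ j ≤ n} |x(j)| converges to a finite limit. -/
open Filter Finset Topology

/-- Running maximum of `g` over `{1,…,n}` (value `0` when `n = 0`). -/
noncomputable def runMax1 (g : ℕ → ℝ) (n : ℕ) : ℝ :=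
  if h : 1 ≤ n then (Finset.Icc 1 n).sup' (Finset.nonempty_Icc.mpr h) g else 0

/-- Running maximum of `g` over `{0,…,n}`. -/
noncomputable def runMax0 (g : ℕ → ℝ) (n : ℕ) : ℝ :=
  (Finset.Icc 0 n).sup' (Finset.nonempty_Icc.mpr (Nat.zero_le n)) g

lemma runMax0_mono (g : ℕ → ℝ) : Monotone (runMax0 g) := by
  intro n m h
  unfold runMax0
  apply Finset.sup'_le
  intro j hj
  exact Finset.le_sup' g (Finset.mem_Icc.mpr
    ⟨Nat.zero_le _, le_trans (Finset.mem_Icc.mp hj).2 h⟩)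

lemma runMax1_mono (g : ℕ → ℝ) (hg : ∀ j, 0 ≤ g j) : Monotone (runMax1 g) := by
  intro n m h
  unfold runMax1
  by_cases hn : 1 ≤ n
  · have hm : 1 ≤ m := le_trans hn h
    rw [dif_pos hn, dif_pos hm]
    apply Finset.sup'_le
    intro j hj
    exact Finset.le_sup' g (Finset.mem_Icc.mpr
      ⟨(Finset.mem_Icc.mp hj).1, le_trans (Finset.mem_Icc.mp hj).2 h⟩)
  · rw [dif_neg hn]
    by_cases hm : 1 ≤ m
    · rw [dif_pos hm]
      calc (0:ℝ) ≤ g 1 := hg 1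
        _ ≤ _ := Finset.le_sup' g (Finset.mem_Icc.mpr ⟨le_rfl, hm⟩)
    · rw [dif_neg hm]

lemma sublinear_bound (f : ℝ → ℝ) (hf : Continuous f)
    (hsub : Tendsto (fun y => f y / y) (cocompact ℝ) (𝓝 0))
    {ε : ℝ} (hε : 0 < ε) : ∃ C : ℝ, 0 ≤ C ∧ ∀ y, |f y| ≤ ε * |y| + C := by
  have h1 : (fun y => f y / y) ⁻¹' Metric.ball 0 ε ∈ cocompact ℝ :=
    hsub (Metric.ball_mem_nhds (0:ℝ) hε)
  rw [mem_cocompact] at h1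
  obtain ⟨s, hs, hsc⟩ := h1
  obtain ⟨r, hr⟩ := hs.isBounded.subset_closedBall 0
  set r' : ℝ := max r 0 with hr'
  obtain ⟨C, hC⟩ := (isCompact_closedBall (0:ℝ) r').exists_bound_of_continuousOn
    hf.continuousOn
  refine ⟨max C 0, le_max_right _ _, fun y => ?_⟩
  by_cases hy : |y| ≤ r'
  · have : y ∈ Metric.closedBall (0:ℝ) r' := by
      simpa [Metric.mem_closedBall, Real.dist_eq] using hy
    have := hC y this
    have h2 : |f y| ≤ C := by simpa [Real.norm_eq_abs] using this
    have : (0:ℝ) ≤ ε * |y| := mul_nonneg hε.le (abs_nonneg _)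
    calc |f y| ≤ C := h2
      _ ≤ max C 0 := le_max_left _ _
      _ ≤ ε * |y| + max C 0 := by linarith
  · push_neg at hy
    have hy0 : 0 < |y| := lt_of_le_of_lt (le_max_right r 0) hy
    have hys : y ∉ s := by
      intro hmem
      have := hr hmem
      rw [Metric.mem_closedBall, Real.dist_eq, sub_zero] at this
      exact absurd (le_trans this (le_max_left r 0)) (not_le.mpr hy)
    have : y ∈ (fun y => f y / y) ⁻¹' Metric.ball 0 ε := hsc hys
    rw [Set.mem_preimage, Metric.mem_ball, Real.dist_eq, sub_zero, abs_div] at this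
    have h3 : |f y| < ε * |y| := (div_lt_iff₀ hy0).mp this
    have : (0:ℝ) ≤ max C 0 := le_max_right _ _
    linarith

theorem stmt1
(f : ℝ → ℝ) (k H x : ℕ → ℝ) (ξ : ℝ)
    (hf : Continuous f)
    (hsub : Filter.Tendsto (fun y => f y / y) (Filter.cocompact ℝ) (nhds 0))
    (hk : Summable (fun j => |k j|))
    (hx0 : x 0 = ξ)
    (hx : ∀ n : ℕ, x (n + 1) = H (n + 1) + ∑ j ∈ Finset.range (n + 1), k (n - j) * f (x j))
    (hH : ∃ L : ℝ, Filter.Tendsto (fun n => runMax1 (fun j => |H j|) n) Filter.atTop (nhds L)) :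
    ∃ M : ℝ, Filter.Tendsto (fun n => runMax0 (fun j => |x j|) n) Filter.atTop (nhds M) := by
  obtain ⟨L, hL⟩ := hH
  set K : ℝ := ∑' j, |k j| with hK
  have hK0 : 0 ≤ K := tsum_nonneg (fun j => abs_nonneg _)
  set ε : ℝ := 1 / (2 * (K + 1)) with hε
  have hεpos : 0 < ε := by positivity
  have hεK : ε * K ≤ 1 / 2 := by
    rw [hε, div_mul_eq_mul_div, one_mul, div_le_div_iff₀ (by positivity) (by norm_num)]
    nlinarith
  obtain ⟨C, hC0, hCb⟩ := sublinear_bound f hf hsub hεpos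
  -- H bounded by L
  have hHmono : Monotone (fun n => runMax1 (fun j => |H j|) n) := runMax1_mono _ (fun j => abs_nonneg _)
  have hHle : ∀ n, runMax1 (fun j => |H j|) n ≤ L := fun n => hHmono.ge_of_tendsto hL n
  have hHb : ∀ n, 1 ≤ n → |H n| ≤ L := by
    intro n hn
    calc |H n| ≤ runMax1 (fun j => |H j|) n := by
          unfold runMax1
          rw [dif_pos hn]
          exact Finset.le_sup' (fun j => |H j|) (Finset.mem_Icc.mpr ⟨hn, le_refl n⟩)
      _ ≤ L := hHle n
  have hL0 : 0 ≤ L := le_trans (abs_nonneg (H 1)) (hHb 1 le_rfl)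
  set M : ℝ := max |ξ| (2 * (L + K * C)) with hM
  have hM0 : 0 ≤ M := le_trans (abs_nonneg ξ) (le_max_left _ _)
  -- pointwise bound
  have hxb : ∀ n, |x n| ≤ M := by
    intro n
    induction n using Nat.strong_induction_on with
    | _ n ih =>
      match n with
      | 0 => rw [hx0]; exact le_max_left _ _
      | Nat.succ m =>
        rw [hx m]
        have hsum : |∑ j ∈ Finset.range (m + 1), k (m - j) * f (x j)| ≤ K * (ε * M + C) := by
          calc |∑ j ∈ Finset.range (m + 1), k (m - j) * f (x j)|
              ≤ ∑ j ∈ Finset.range (m + 1), |k (m - j) * f (x j)| :=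
                Finset.abs_sum_le_sum_abs _ _
            _ = ∑ j ∈ Finset.range (m + 1), |k (m - j)| * |f (x j)| := by
                simp [abs_mul]
            _ ≤ ∑ j ∈ Finset.range (m + 1), |k (m - j)| * (ε * M + C) := by
                apply Finset.sum_le_sum
                intro j hj
                apply mul_le_mul_of_nonneg_left _ (abs_nonneg _)
                calc |f (x j)| ≤ ε * |x j| + C := hCb (x j)
                  _ ≤ ε * M + C := by
                      have := ih j (Nat.lt_succ_of_le (Nat.lt_succ_iff.mp
                        (Finset.mem_range.mp hj)))
                      nlinarith
            _ = (∑ j ∈ Finset.range (m + 1), |k (m - j)|) * (ε * M + C) := by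
                rw [← Finset.sum_mul]
            _ ≤ K * (ε * M + C) := by
                apply mul_le_mul_of_nonneg_right _ (by nlinarith)
                have hre : ∑ j ∈ Finset.range (m + 1), |k (m - j)|
                    = ∑ j ∈ Finset.range (m + 1), |k j| := by
                  have := Finset.sum_range_reflect (fun j => |k j|) (m + 1)
                  simpa using this
                rw [hre]
                exact Summable.sum_le_tsum _ (fun i _ => abs_nonneg _) hk
        calc |H (m + 1) + ∑ j ∈ Finset.range (m + 1), k (m - j) * f (x j)|
            ≤ |H (m + 1)| + |∑ j ∈ Finset.range (m + 1), k (m - j) * f (x j)| :=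
              abs_add_le _ _
          _ ≤ L + K * (ε * M + C) := add_le_add (hHb (m + 1) (Nat.le_add_left 1 m)) hsum
          _ ≤ L + (1 / 2) * M + K * C := by nlinarith
          _ ≤ M := by
              have : 2 * (L + K * C) ≤ M := le_max_right _ _
              linarith
  have hmono : Monotone (fun n => runMax0 (fun j => |x j|) n) := runMax0_mono _
  have hbdd : BddAbove (Set.range (fun n => runMax0 (fun j => |x j|) n)) := by
    refine ⟨M, ?_⟩
    rintro y ⟨n, rfl⟩
    unfold runMax0
    exact Finset.sup'_le _ _ (fun j _ => hxb j)
  exact ⟨_, tendsto_atTop_ciSup hmono hbdd⟩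
end

section
/- Under the same Volterra equation hypotheses, if H*(n) := max_{1 ≤ j ≤ n} |H(j)| → ∞ as n → ∞, then x*(n) := max_{0 ≤ j ≤ n} |x(j)| → ∞ as n → ∞. -/
open Filter Finset Topology

theorem stmt2
(f : ℝ → ℝ) (k H x : ℕ → ℝ) (ξ : ℝ)
    (hf : Continuous f)
    (hsub : Filter.Tendsto (fun y => f y / y) (Filter.cocompact ℝ) (nhds 0))
    (hk : Summable (fun j => |k j|))
    (hx0 : x 0 = ξ)
    (hx : ∀ n : ℕ, x (n + 1) = H (n + 1) + ∑ j ∈ Finset.range (n + 1), k (n - j) * f (x j))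
    (hH : Filter.Tendsto (fun n => runMax1 (fun j => |H j|) n) Filter.atTop Filter.atTop) :
    Filter.Tendsto (fun n => runMax0 (fun j => |x j|) n) Filter.atTop Filter.atTop := by
  have hmono : Monotone (fun n => runMax0 (fun j => |x j|) n) := by
    intro a b hab
    exact Finset.sup'_mono _ (Finset.Icc_subset_Icc le_rfl hab) _
  apply tendsto_atTop_atTop_of_monotone hmono
  by_contra hno
  push_neg at hno
  obtain ⟨b, hb⟩ := hno
  -- every |x n| < b
  have hxb : ∀ n, |x n| < b := by
    intro n
    refine lt_of_le_of_lt ?_ (hb n)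
    unfold runMax0
    exact Finset.le_sup' (fun j => |x j|) (Finset.mem_Icc.mpr ⟨Nat.zero_le n, le_rfl⟩)
  -- bound f on [-b, b]
  obtain ⟨C, hC⟩ := (isCompact_Icc : IsCompact (Set.Icc (-b) b)).exists_bound_of_continuousOn
    hf.continuousOn
  set C' : ℝ := max C 0 with hC'def
  have hC'0 : 0 ≤ C' := le_max_right _ _
  have hfb : ∀ n, |f (x n)| ≤ C' := by
    intro n
    have h1 : x n ∈ Set.Icc (-b) b := by
      have := (hxb n)
      constructor <;> [linarith [neg_abs_le (x n)]; linarith [le_abs_self (x n)]]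
    exact le_trans (hC _ h1) (le_max_left _ _)
  set T : ℝ := ∑' j, |k j| with hT
  have hT0 : 0 ≤ T := tsum_nonneg fun j => abs_nonneg _
  have hb0 : 0 < b := lt_of_le_of_lt (abs_nonneg (x 0)) (hxb 0)
  set B : ℝ := b + T * C' with hB
  -- each |H (m+1)| ≤ B
  have hHb : ∀ m : ℕ, |H (m + 1)| ≤ B := by
    intro m
    have hEq : H (m + 1) = x (m + 1) - ∑ j ∈ Finset.range (m + 1), k (m - j) * f (x j) := by
      rw [hx m]; ring
    have hsum : |∑ j ∈ Finset.range (m + 1), k (m - j) * f (x j)| ≤ T * C' := by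
      calc |∑ j ∈ Finset.range (m + 1), k (m - j) * f (x j)|
          ≤ ∑ j ∈ Finset.range (m + 1), |k (m - j) * f (x j)| :=
            Finset.abs_sum_le_sum_abs _ _
        _ = ∑ j ∈ Finset.range (m + 1), |k (m - j)| * |f (x j)| := by
            simp [abs_mul]
        _ ≤ ∑ j ∈ Finset.range (m + 1), |k (m - j)| * C' := by
            apply Finset.sum_le_sum
            intro j _
            exact mul_le_mul_of_nonneg_left (hfb j) (abs_nonneg _)
        _ = (∑ j ∈ Finset.range (m + 1), |k (m - j)|) * C' := by
            rw [Finset.sum_mul]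
        _ ≤ T * C' := by
            apply mul_le_mul_of_nonneg_right _ hC'0
            have hrefl : ∑ j ∈ Finset.range (m + 1), |k (m + 1 - 1 - j)|
                = ∑ j ∈ Finset.range (m + 1), |k j| :=
              Finset.sum_range_reflect (fun j => |k j|) (m + 1)
            simp only [Nat.add_sub_cancel] at hrefl
            rw [hrefl]
            exact Summable.sum_le_tsum _ (fun j _ => abs_nonneg _) hk
    calc |H (m + 1)| ≤ |x (m + 1)| + |∑ j ∈ Finset.range (m + 1), k (m - j) * f (x j)| := by
          rw [hEq]; exact abs_sub _ _
      _ ≤ b + T * C' := add_le_add (le_of_lt (hxb _)) hsum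
  -- runMax1 |H| is bounded by B
  have hrb : ∀ n, runMax1 (fun j => |H j|) n ≤ B := by
    intro n
    unfold runMax1
    split
    · apply Finset.sup'_le
      intro j hj
      obtain ⟨hj1, _⟩ := Finset.mem_Icc.mp hj
      obtain ⟨m, rfl⟩ := Nat.exists_eq_add_of_le hj1
      simpa [Nat.add_comm] using hHb m
    · positivity
  obtain ⟨n, hn⟩ := (hH.eventually (eventually_ge_atTop (B + 1))).exists
  have := hrb n
  linarith
end

section
/- Under the same Volterra equation hypotheses, there exists ε₀ > 0 such that for all ε ∈ (0, ε₀) with ε·|k|₁ < 1, there is a constant F(ε) > 0 so that x*(n) ≤ (|x(0)| + |k|₁ F(ε) + H*(n)) / (1 − ε|k|₁) for all n ≥ 1, where |k|₁ = ∑_{j=0}^∞ |k(j)|, H*(n) = max_{1≤j≤n} |H(j)|, x*(n) = max_{0≤j≤n} |x(j)|. -/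
open Filter Finset Topology

lemma affine_bound (f : ℝ → ℝ) (hf : Continuous f)
    (hsub : Filter.Tendsto (fun y => f y / y) (Filter.cocompact ℝ) (nhds 0))
    (ε : ℝ) (hε : 0 < ε) : ∃ F : ℝ, 0 < F ∧ ∀ y, |f y| ≤ ε * |y| + F := by
  have h := (hasBasis_cocompact.tendsto_iff (Metric.nhds_basis_closedBall)).mp hsub ε hε
  obtain ⟨K, hKc, hK⟩ := h
  obtain ⟨R, hR⟩ := hKc.isBounded.subset_closedBall 0
  set R' := max R 0 with hR'
  obtain ⟨C, hC⟩ := (isCompact_closedBall (0:ℝ) R').exists_bound_of_continuousOn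
    hf.continuousOn
  refine ⟨|C| + 1, by positivity, fun y => ?_⟩
  by_cases hy : |y| ≤ R'
  · have h1 := hC y (by simpa [Metric.mem_closedBall, Real.dist_eq] using hy)
    have h1 : |f y| ≤ C := by simpa using h1
    have h2 : C ≤ |C| + 1 := by
      have := le_abs_self C; linarith
    have h3 : 0 ≤ ε * |y| := by positivity
    linarith
  · push_neg at hy
    have hyR : R < |y| := lt_of_le_of_lt (le_max_left R 0) hy
    have hypos : 0 < |y| := lt_of_le_of_lt (le_max_right R 0) hy
    have hy0 : y ∉ K := by
      intro hyK
      have := hR hyK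
      simp [Metric.mem_closedBall, Real.dist_eq] at this
      linarith
    have h1 : |f y| / |y| ≤ ε := by
      simpa [Metric.mem_closedBall, Real.dist_eq, abs_div] using hK y hy0
    have h2 : |f y| ≤ ε * |y| := by
      rw [div_le_iff₀ hypos] at h1; linarith
    have : (0:ℝ) < |C| + 1 := by positivity
    linarith

theorem stmt3
(f : ℝ → ℝ) (k H x : ℕ → ℝ) (ξ : ℝ)
    (hf : Continuous f)
    (hsub : Filter.Tendsto (fun y => f y / y) (Filter.cocompact ℝ) (nhds 0))
    (hk : Summable (fun j => |k j|))
    (hx0 : x 0 = ξ)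
    (hx : ∀ n : ℕ, x (n + 1) = H (n + 1) + ∑ j ∈ Finset.range (n + 1), k (n - j) * f (x j)) :
    ∃ ε₀ : ℝ, 0 < ε₀ ∧ ∀ ε : ℝ, 0 < ε → ε < ε₀ → ε * (∑' j, |k j|) < 1 →
      ∃ F : ℝ, 0 < F ∧ ∀ n : ℕ, 1 ≤ n →
        runMax0 (fun j => |x j|) n ≤
          (|x 0| + (∑' j, |k j|) * F + runMax1 (fun j => |H j|) n) /
            (1 - ε * (∑' j, |k j|)) := by
  refine ⟨1, one_pos, fun ε hε _ hεK => ?_⟩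
  set K1 := ∑' j, |k j| with hK1
  have hK1nn : 0 ≤ K1 := tsum_nonneg fun j => abs_nonneg _
  obtain ⟨F, hF, hFb⟩ := affine_bound f hf hsub ε hε
  refine ⟨F, hF, fun n hn => ?_⟩
  set Xn := runMax0 (fun j => |x j|) n with hXn
  set Hn := runMax1 (fun j => |H j|) n with hHn
  have hXge : ∀ j ≤ n, |x j| ≤ Xn := fun j hj =>
    Finset.le_sup' (fun j => |x j|) (Finset.mem_Icc.mpr ⟨Nat.zero_le j, hj⟩)
  have hXnn : 0 ≤ Xn := (abs_nonneg (x 0)).trans (hXge 0 (Nat.zero_le n))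
  have hHge : ∀ j, 1 ≤ j → j ≤ n → |H j| ≤ Hn := by
    intro j h1 h2
    rw [hHn, runMax1, dif_pos hn]
    exact Finset.le_sup' (fun j => |H j|) (Finset.mem_Icc.mpr ⟨h1, h2⟩)
  have hHnn : 0 ≤ Hn := (abs_nonneg (H 1)).trans (hHge 1 le_rfl hn)
  have hd : 0 < 1 - ε * K1 := by linarith
  rw [le_div_iff₀ hd]
  have key : Xn ≤ |x 0| + K1 * F + Hn + ε * K1 * Xn := by
    conv_lhs => rw [hXn, runMax0]
    apply Finset.sup'_le
    intro m hm
    have hmn : m ≤ n := (Finset.mem_Icc.mp hm).2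
    match m with
    | 0 =>
      have h1 : 0 ≤ K1 * F := by positivity
      have h2 : 0 ≤ ε * K1 * Xn := by positivity
      show |x 0| ≤ _
      linarith
    | (p+1) =>
      have hsum : ∑ j ∈ Finset.range (p+1), |k (p - j)| ≤ K1 := by
        have hr : ∑ j ∈ Finset.range (p+1), |k (p - j)|
            = ∑ j ∈ Finset.range (p+1), |k j| := by
          have := Finset.sum_range_reflect (fun j => |k j|) (p+1)
          simpa using this
        rw [hr]
        exact Summable.sum_le_tsum _ (fun i _ => abs_nonneg _) hk
      have hb : ∀ j ∈ Finset.range (p+1), |k (p - j) * f (x j)| ≤ |k (p - j)| * (ε * Xn + F) := by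
        intro j hj
        rw [abs_mul]
        apply mul_le_mul_of_nonneg_left _ (abs_nonneg _)
        have hjn : j ≤ n := le_trans (Nat.lt_succ_iff.mp (Finset.mem_range.mp hj)) (le_trans (Nat.le_succ p) hmn)
        have := hFb (x j)
        have h2 : ε * |x j| ≤ ε * Xn := mul_le_mul_of_nonneg_left (hXge j hjn) hε.le
        linarith
      have hs2 : ∑ j ∈ Finset.range (p+1), |k (p - j) * f (x j)|
          ≤ K1 * (ε * Xn + F) := by
        calc ∑ j ∈ Finset.range (p+1), |k (p - j) * f (x j)|
            ≤ ∑ j ∈ Finset.range (p+1), |k (p - j)| * (ε * Xn + F) :=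
              Finset.sum_le_sum hb
          _ = (∑ j ∈ Finset.range (p+1), |k (p - j)|) * (ε * Xn + F) := by
              rw [Finset.sum_mul]
          _ ≤ K1 * (ε * Xn + F) := by
              apply mul_le_mul_of_nonneg_right hsum
              positivity
      have habs : |x (p+1)| ≤ |H (p+1)| + ∑ j ∈ Finset.range (p+1), |k (p - j) * f (x j)| := by
        rw [hx p]
        exact (abs_add_le _ _).trans (by
          gcongr
          exact Finset.abs_sum_le_sum_abs _ _)
      have hH1 : |H (p+1)| ≤ Hn := hHge (p+1) (Nat.succ_le_succ (Nat.zero_le p)) hmn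
      have hx0nn : 0 ≤ |x 0| := abs_nonneg _
      show |x (p+1)| ≤ _
      nlinarith
  nlinarith [key]
end

section
/- If H*(n) → ∞ as n → ∞, then under the Volterra equation hypotheses, lim_{n→∞} x*(n)/H*(n) = 1, where x*(n) = max_{0≤j≤n}|x(j)| and H*(n) = max_{1≤j≤n}|H(j)|. -/
open Filter Finset Topology

lemma le_runMax0 (g : ℕ → ℝ) {n j : ℕ} (h : j ≤ n) : g j ≤ runMax0 g n :=
  Finset.le_sup' g (Finset.mem_Icc.mpr ⟨Nat.zero_le _, h⟩)

lemma runMax0_le (g : ℕ → ℝ) {n : ℕ} {c : ℝ} (h : ∀ j ≤ n, g j ≤ c) :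
    runMax0 g n ≤ c :=
  Finset.sup'_le _ _ fun j hj => h j (Finset.mem_Icc.mp hj).2

lemma le_runMax1 (g : ℕ → ℝ) {n j : ℕ} (h1 : 1 ≤ j) (h2 : j ≤ n) : g j ≤ runMax1 g n := by
  rw [runMax1, dif_pos (le_trans h1 h2)]
  exact Finset.le_sup' g (Finset.mem_Icc.mpr ⟨h1, h2⟩)

lemma runMax1_le (g : ℕ → ℝ) {n : ℕ} {c : ℝ} (hn : 1 ≤ n)
    (h : ∀ j, 1 ≤ j → j ≤ n → g j ≤ c) : runMax1 g n ≤ c := by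
  rw [runMax1, dif_pos hn]
  exact Finset.sup'_le _ _ fun j hj => h j (Finset.mem_Icc.mp hj).1 (Finset.mem_Icc.mp hj).2

lemma linear_bound (f : ℝ → ℝ) (hf : Continuous f)
    (hsub : Tendsto (fun y => f y / y) (cocompact ℝ) (nhds 0))
    {ε : ℝ} (hε : 0 < ε) : ∃ C : ℝ, 0 ≤ C ∧ ∀ y, |f y| ≤ ε * |y| + C := by
  have hev : ∀ᶠ y in cocompact ℝ, |f y| / |y| < ε := by
    have := Metric.tendsto_nhds.mp hsub ε hε
    simpa [Real.dist_eq, abs_div] using this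
  rw [Filter.hasBasis_cocompact.eventually_iff] at hev
  obtain ⟨s, hs, hout⟩ := hev
  obtain ⟨r, hr⟩ := hs.isBounded.subset_closedBall 0
  obtain ⟨C0, hC0⟩ := (isCompact_Icc (a := -(max r 0)) (b := max r 0)).exists_bound_of_continuousOn
    hf.continuousOn
  refine ⟨max C0 0, le_max_right _ _, fun y => ?_⟩
  rcases le_or_gt |y| (max r 0) with hy | hy
  · have hy' : y ∈ Set.Icc (-(max r 0)) (max r 0) := by
      constructor
      · linarith [neg_abs_le y]
      · linarith [le_abs_self y]
    have h1 := hC0 y hy'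
    have h2 : (0:ℝ) ≤ ε * |y| := by positivity
    have : |f y| ≤ C0 := by simpa [Real.norm_eq_abs] using h1
    have := le_max_left C0 (0:ℝ)
    linarith
  · have hyn : y ∉ s := by
      intro hys
      have := hr hys
      rw [Metric.mem_closedBall, Real.dist_eq, sub_zero] at this
      have := le_max_left r (0:ℝ)
      linarith
    have h3 : |f y| / |y| < ε := hout hyn
    have hy0 : |y| > 0 := lt_of_le_of_lt (le_max_right r 0) hy
    have h4 : |f y| < ε * |y| := (div_lt_iff₀ hy0).mp h3
    have := le_max_right C0 (0:ℝ)
    linarith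

theorem stmt4
(f : ℝ → ℝ) (k H x : ℕ → ℝ) (ξ : ℝ)
    (hf : Continuous f)
    (hsub : Filter.Tendsto (fun y => f y / y) (Filter.cocompact ℝ) (nhds 0))
    (hk : Summable (fun j => |k j|))
    (hx0 : x 0 = ξ)
    (hx : ∀ n : ℕ, x (n + 1) = H (n + 1) + ∑ j ∈ Finset.range (n + 1), k (n - j) * f (x j))
    (hH : Filter.Tendsto (fun n => runMax1 (fun j => |H j|) n) Filter.atTop Filter.atTop) :
    Filter.Tendsto
      (fun n => runMax0 (fun j => |x j|) n / runMax1 (fun j => |H j|) n)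
      Filter.atTop (nhds 1) := by
  have hK0 : 0 ≤ ∑' i, |k i| := tsum_nonneg fun i => abs_nonneg _
  set K := ∑' i, |k i| with hKdef
  have hsumK : ∀ m : ℕ, ∑ i ∈ Finset.range m, |k i| ≤ K := fun m =>
    hk.sum_le_tsum (Finset.range m) (fun i _ => abs_nonneg _)
  rw [Metric.tendsto_nhds]
  intro δ hδ
  -- choose ε
  obtain ⟨ε, hε, ha1, ha2⟩ : ∃ ε : ℝ, 0 < ε ∧ K * ε * (1 + δ) ≤ δ / 8 ∧ K * ε ≤ 1 / 8 := by
    refine ⟨δ / (8 * (K + 1) * (1 + δ)), by positivity, ?_, ?_⟩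
    · have he : K * (δ / (8 * (K + 1) * (1 + δ))) * (1 + δ)
          = (K * δ * (1 + δ)) / (8 * (K + 1) * (1 + δ)) := by ring
      rw [he, div_le_div_iff₀ (by positivity) (by norm_num)]
      nlinarith [mul_pos hδ (by linarith : (0:ℝ) < 1 + δ)]
    · have he : K * (δ / (8 * (K + 1) * (1 + δ)))
          = (K * δ) / (8 * (K + 1) * (1 + δ)) := by ring
      rw [he, div_le_div_iff₀ (by positivity) (by norm_num)]
      nlinarith [hK0, hδ, mul_nonneg hK0 hδ.le]
  have ha0 : 0 ≤ K * ε := mul_nonneg hK0 hε.le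
  obtain ⟨C, hC0, hC⟩ := linear_bound f hf hsub hε
  have hKC : 0 ≤ K * C := mul_nonneg hK0 hC0
  -- the convolution-sum bound
  have hsum : ∀ m : ℕ, ∀ B : ℝ, 0 ≤ B → (∀ i, i ≤ m → |x i| ≤ B) →
      |∑ j ∈ Finset.range (m + 1), k (m - j) * f (x j)| ≤ K * ε * B + K * C := by
    intro m B hB hxB
    have step1 : |∑ j ∈ Finset.range (m + 1), k (m - j) * f (x j)|
        ≤ ∑ j ∈ Finset.range (m + 1), |k (m - j)| * |f (x j)| := by
      refine (Finset.abs_sum_le_sum_abs _ _).trans (le_of_eq ?_)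
      exact Finset.sum_congr rfl fun j _ => abs_mul _ _
    have step2 : ∑ j ∈ Finset.range (m + 1), |k (m - j)| * |f (x j)|
        ≤ ∑ j ∈ Finset.range (m + 1), |k (m - j)| * (ε * B + C) := by
      refine Finset.sum_le_sum fun j hj => ?_
      refine mul_le_mul_of_nonneg_left ?_ (abs_nonneg _)
      have := hC (x j)
      have hxj : |x j| ≤ B := hxB j (Nat.lt_succ_iff.mp (Finset.mem_range.mp hj))
      nlinarith [hε.le]
    have step3 : ∑ j ∈ Finset.range (m + 1), |k (m - j)| * (ε * B + C)
        = (∑ j ∈ Finset.range (m + 1), |k j|) * (ε * B + C) := by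
      rw [← Finset.sum_mul]
      congr 1
      have := Finset.sum_range_reflect (fun i => |k i|) (m + 1)
      simpa using this.symm ▸ rfl
    calc |∑ j ∈ Finset.range (m + 1), k (m - j) * f (x j)|
        ≤ ∑ j ∈ Finset.range (m + 1), |k (m - j)| * |f (x j)| := step1
      _ ≤ ∑ j ∈ Finset.range (m + 1), |k (m - j)| * (ε * B + C) := step2
      _ = (∑ j ∈ Finset.range (m + 1), |k j|) * (ε * B + C) := step3
      _ ≤ K * (ε * B + C) := by
          refine mul_le_mul_of_nonneg_right (hsumK _) ?_
          nlinarith [mul_nonneg hε.le hB]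
      _ = K * ε * B + K * C := by ring
  -- eventual bounds
  have hev1 : ∀ᶠ n in atTop, 1 ≤ n := eventually_ge_atTop 1
  have hev2 : ∀ᶠ n : ℕ in atTop,
      (8 * (|ξ| + K * C) + 8) / δ ≤ runMax1 (fun j => |H j|) n :=
    hH.eventually_ge_atTop _
  filter_upwards [hev1, hev2] with n hn1 hn2
  have hHpos : 0 < runMax1 (fun j => |H j|) n :=
    lt_of_lt_of_le (by positivity) hn2
  have hn2' : 8 * (|ξ| + K * C) + 8 ≤ δ * runMax1 (fun j => |H j|) n := by
    rw [div_le_iff₀ hδ] at hn2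
    linarith [hn2]
  have hX0 : 0 ≤ runMax0 (fun j => |x j|) n :=
    le_trans (abs_nonneg (x 0)) (le_runMax0 (fun j => |x j|) (Nat.zero_le n))
  have hXle : ∀ j, j ≤ n → |x j| ≤ runMax0 (fun j => |x j|) n :=
    fun j hj => le_runMax0 (fun j => |x j|) hj
  -- inequality A
  have hA : runMax0 (fun j => |x j|) n
      ≤ |ξ| + runMax1 (fun j => |H j|) n
        + (K * ε * runMax0 (fun j => |x j|) n + K * C) := by
    refine runMax0_le _ fun j hj => ?_
    cases j with
    | zero =>
        simp only [hx0]
        nlinarith [mul_nonneg ha0 hX0, hKC, hHpos]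
    | succ m =>
        have hS := hsum m (runMax0 (fun j => |x j|) n) hX0
          (fun i hi => hXle i (le_trans hi (Nat.le_of_succ_le hj)))
        have hHle : |H (m + 1)| ≤ runMax1 (fun j => |H j|) n :=
          le_runMax1 (fun j => |H j|) (Nat.succ_le_succ (Nat.zero_le m)) hj
        have habs : |x (m + 1)| ≤ |H (m + 1)|
            + |∑ j ∈ Finset.range (m + 1), k (m - j) * f (x j)| := by
          rw [hx m]; exact abs_add_le _ _
        have hξ0 : 0 ≤ |ξ| := abs_nonneg _
        linarith
  -- inequality B
  have hB : runMax1 (fun j => |H j|) n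
      ≤ runMax0 (fun j => |x j|) n
        + (K * ε * runMax0 (fun j => |x j|) n + K * C) := by
    refine runMax1_le _ hn1 fun j h1 h2 => ?_
    cases j with
    | zero => exact absurd h1 (by norm_num)
    | succ m =>
        have hS := hsum m (runMax0 (fun j => |x j|) n) hX0
          (fun i hi => hXle i (le_trans hi (Nat.le_of_succ_le h2)))
        have hxle : |x (m + 1)| ≤ runMax0 (fun j => |x j|) n := hXle _ h2
        have hHeq : H (m + 1) = x (m + 1)
            - ∑ j ∈ Finset.range (m + 1), k (m - j) * f (x j) := by
          rw [hx m]; ring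
        have habs : |H (m + 1)| ≤ |x (m + 1)|
            + |∑ j ∈ Finset.range (m + 1), k (m - j) * f (x j)| := by
          rw [hHeq, sub_eq_add_neg]
          exact (abs_add_le _ _).trans (by rw [abs_neg])
        linarith
  -- final arithmetic
  rw [Real.dist_eq, abs_sub_lt_iff]
  have hone : (0:ℝ) < 1 - K * ε := by linarith
  have hone' : (0:ℝ) < 1 + K * ε := by linarith
  have haHn := mul_le_mul_of_nonneg_right ha1 hHpos.le
  have haHn0 := mul_nonneg (mul_nonneg ha0 hδ.le) hHpos.le
  have hxi0 : 0 ≤ |ξ| := abs_nonneg ξ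
  constructor
  · rw [sub_lt_iff_lt_add, div_lt_iff₀ hHpos]
    have h9 : (1 - K * ε) * runMax0 (fun j => |x j|) n
        < (1 - K * ε) * ((δ + 1) * runMax1 (fun j => |H j|) n) := by
      nlinarith
    have := (mul_lt_mul_iff_right₀ hone).mp h9
    linarith
  · rw [sub_lt_comm, lt_div_iff₀ hHpos]
    have h11 : (1 + K * ε) * ((1 - δ) * runMax1 (fun j => |H j|) n)
        < (1 + K * ε) * runMax0 (fun j => |x j|) n := by
      nlinarith
    have := (mul_lt_mul_iff_right₀ hone').mp h11
    linarith
end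

section
/- Under the Volterra equation hypotheses, the following are equivalent: (a) H(n) → ∞ and H is asymptotic to some increasing sequence; (b) x(n) → ∞ and x is asymptotic to some increasing sequence. Moreover, either statement implies lim_{n→∞} x(n)/H(n) = 1. -/
open Filter Finset Topology

noncomputable def vMax (g : ℕ → ℝ) (n : ℕ) : ℝ :=
  (Finset.range (n+1)).sup' (Finset.nonempty_range_iff.mpr (Nat.succ_ne_zero n)) (fun j => |g j|)

lemma le_vMax (g : ℕ → ℝ) {j n : ℕ} (h : j ≤ n) : |g j| ≤ vMax g n :=
  Finset.le_sup' (fun j => |g j|) (Finset.mem_range.mpr (Nat.lt_succ_of_le h))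

lemma vMax_le (g : ℕ → ℝ) {n : ℕ} {a : ℝ} (h : ∀ j ≤ n, |g j| ≤ a) : vMax g n ≤ a :=
  Finset.sup'_le _ _ (fun j hj => h j (Nat.lt_succ_iff.mp (Finset.mem_range.mp hj)))

lemma vMax_nonneg (g : ℕ → ℝ) (n : ℕ) : 0 ≤ vMax g n :=
  le_trans (abs_nonneg (g 0)) (le_vMax g (Nat.zero_le n))

lemma vMax_mono (g : ℕ → ℝ) {m n : ℕ} (h : m ≤ n) : vMax g m ≤ vMax g n :=
  vMax_le g (fun j hj => le_vMax g (hj.trans h))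

/-- A continuous function with `f y / y → 0` at infinity admits, for every `ε > 0`,
a bound `|f y| ≤ ε |y| + C`. -/
lemma lin_bound (f : ℝ → ℝ) (hf : Continuous f)
    (hsub : Filter.Tendsto (fun y => f y / y) (Filter.cocompact ℝ) (nhds 0)) :
    ∀ ε > (0:ℝ), ∃ C, 0 ≤ C ∧ ∀ y, |f y| ≤ ε * |y| + C := by
  intro ε hε
  have h1 : ∀ᶠ y in cocompact ℝ, |f y / y| < ε := by
    have h0 := Metric.tendsto_nhds.mp hsub ε hε
    filter_upwards [h0] with y hy
    rw [Real.dist_eq, sub_zero] at hy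
    exact hy
  obtain ⟨t, ht, hts⟩ := Filter.mem_cocompact.mp h1
  obtain ⟨R0, hR⟩ := ht.isBounded.subset_closedBall 0
  set R := max R0 0 with hRdef
  have hR' : t ⊆ Metric.closedBall 0 R :=
    hR.trans (Metric.closedBall_subset_closedBall (le_max_left _ _))
  have hcb : IsCompact (Metric.closedBall (0:ℝ) R) := isCompact_closedBall 0 R
  obtain ⟨C0, hC0⟩ := hcb.exists_bound_of_continuousOn hf.continuousOn
  refine ⟨max C0 0, le_max_right _ _, fun y => ?_⟩
  by_cases hy : y ∈ Metric.closedBall (0:ℝ) R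
  · have h0 := hC0 y hy
    have h2 : 0 ≤ ε * |y| := mul_nonneg hε.le (abs_nonneg y)
    have : |f y| ≤ C0 := by simpa using h0
    have := le_max_left C0 0
    linarith
  · have hyt : y ∉ t := fun h => hy (hR' h)
    have h3 : |f y / y| < ε := hts hyt
    have hy0 : y ≠ 0 := by
      intro h
      exact hy (by simp [h, hRdef, le_max_right R0 0])
    have heq : |f y| = |f y / y| * |y| := by
      rw [abs_div]; field_simp
    have h4 : |f y / y| * |y| ≤ ε * |y| :=
      mul_le_mul_of_nonneg_right h3.le (abs_nonneg y)
    rw [heq]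
    linarith [le_max_right C0 0]

/-- If `g → ∞` and `g ~ b` with `b` monotone, then the running max of `|g|`
is eventually bounded by `4 g (n+1)`. -/
lemma evmax (g b : ℕ → ℝ) (hb : Monotone b) (hg : Tendsto g atTop atTop)
    (hgb : Tendsto (fun n => g n / b n) atTop (nhds 1)) :
    ∀ᶠ n in atTop, vMax g n ≤ 4 * g (n+1) := by
  have h1 : ∀ᶠ n in atTop, |g n / b n - 1| < 1/2 := by
    have h0 := Metric.tendsto_nhds.mp hgb (1/2) (by norm_num)
    filter_upwards [h0] with n hn
    rwa [Real.dist_eq] at hn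
  have h2 : ∀ᶠ n in atTop, (1:ℝ) ≤ g n := hg.eventually_ge_atTop 1
  obtain ⟨N, hN⟩ := (h1.and h2).exists_forall_of_atTop
  have key : ∀ n ≥ N, 0 < b n ∧ g n ≤ (3/2) * b n ∧ b n ≤ 2 * g n := by
    intro n hn
    obtain ⟨hq, hg1⟩ := hN n hn
    have hgpos : (0:ℝ) < g n := lt_of_lt_of_le one_pos hg1
    have hq1 : 1/2 < g n / b n := by have := abs_lt.mp hq; linarith [this.1]
    have hq2 : g n / b n < 3/2 := by have := abs_lt.mp hq; linarith [this.2]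
    have hbpos : 0 < b n := by
      by_contra hc
      push_neg at hc
      rcases lt_or_eq_of_le hc with h | h
      · have : g n / b n < 0 := div_neg_of_pos_of_neg hgpos h
        linarith
      · rw [h] at hq1; simp at hq1; linarith
    refine ⟨hbpos, ?_, ?_⟩
    · nlinarith [(div_lt_iff₀ hbpos).mp hq2]
    · nlinarith [(lt_div_iff₀ hbpos).mp hq1]
  have h3 : ∀ᶠ n in atTop, vMax g N ≤ g (n+1) := by
    have := hg.eventually_ge_atTop (vMax g N)
    obtain ⟨N2, hN2⟩ := this.exists_forall_of_atTop
    filter_upwards [eventually_ge_atTop N2] with n hn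
    exact hN2 (n+1) (hn.trans (Nat.le_succ n))
  filter_upwards [h3, eventually_ge_atTop N] with n hn3 hnN
  apply vMax_le
  intro j hj
  have hgn1 : (1:ℝ) ≤ g (n+1) := (hN (n+1) (hnN.trans (Nat.le_succ n))).2
  rcases le_or_gt j N with hjN | hjN
  · calc |g j| ≤ vMax g N := le_vMax g hjN
      _ ≤ g (n+1) := hn3
      _ ≤ 4 * g (n+1) := by linarith
  · obtain ⟨hbj, hgj, -⟩ := key j hjN.le
    obtain ⟨-, -, hbn⟩ := key (n+1) (hnN.trans (Nat.le_succ n))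
    have hg1j : (1:ℝ) ≤ g j := (hN j hjN.le).2
    have habs : |g j| = g j := abs_of_pos (lt_of_lt_of_le one_pos hg1j)
    rw [habs]
    calc g j ≤ (3/2) * b j := hgj
      _ ≤ (3/2) * b (n+1) := by nlinarith [hb (Nat.le_succ_of_le hj)]
      _ ≤ (3/2) * (2 * g (n+1)) := by linarith
      _ ≤ 4 * g (n+1) := by linarith

/-- If `u → ∞` and `|r n| ≤ ε u n + C_ε` eventually for every `ε`, then `r n / u n → 0`. -/
lemma quot_zero (r u : ℕ → ℝ) (hu : Tendsto u atTop atTop)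
    (h : ∀ ε > (0:ℝ), ∃ C : ℝ, ∀ᶠ n in atTop, |r n| ≤ ε * u n + C) :
    Tendsto (fun n => r n / u n) atTop (nhds 0) := by
  rw [Metric.tendsto_nhds]
  intro δ hδ
  obtain ⟨C, hC⟩ := h (δ/4) (by linarith)
  have h2 : ∀ᶠ n in atTop, max 1 (4*C/δ) ≤ u n := hu.eventually_ge_atTop _
  filter_upwards [hC, h2] with n h1 h2
  have hu1 : (1:ℝ) ≤ u n := le_trans (le_max_left _ _) h2
  have hupos : (0:ℝ) < u n := lt_of_lt_of_le one_pos hu1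
  have hCu : C ≤ (δ/4) * u n := by
    have := le_trans (le_max_right 1 (4*C/δ)) h2
    rw [div_le_iff₀ hδ] at this
    nlinarith
  have hbound : |r n| ≤ (δ/2) * u n := by linarith
  rw [Real.dist_eq, sub_zero, abs_div, abs_of_pos hupos, div_lt_iff₀ hupos]
  nlinarith

theorem stmt8
(f : ℝ → ℝ) (k H x : ℕ → ℝ) (ξ : ℝ)
    (hf : Continuous f)
    (hsub : Filter.Tendsto (fun y => f y / y) (Filter.cocompact ℝ) (nhds 0))
    (hk : Summable (fun j => |k j|))
    (hx0 : x 0 = ξ)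
    (hx : ∀ n : ℕ, x (n + 1) = H (n + 1) + ∑ j ∈ Finset.range (n + 1), k (n - j) * f (x j)) :
    ((Filter.Tendsto H Filter.atTop Filter.atTop ∧
        ∃ b : ℕ → ℝ, Monotone b ∧ Filter.Tendsto (fun n => H n / b n) Filter.atTop (nhds 1)) ↔
      (Filter.Tendsto x Filter.atTop Filter.atTop ∧
        ∃ b : ℕ → ℝ, Monotone b ∧ Filter.Tendsto (fun n => x n / b n) Filter.atTop (nhds 1))) ∧
    ((Filter.Tendsto H Filter.atTop Filter.atTop ∧
        ∃ b : ℕ → ℝ, Monotone b ∧ Filter.Tendsto (fun n => H n / b n) Filter.atTop (nhds 1)) →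
      Filter.Tendsto (fun n => x n / H n) Filter.atTop (nhds 1)) := by
  set Kv : ℝ := ∑' j, |k j| with hKvdef
  have hKv0 : 0 ≤ Kv := tsum_nonneg (fun j => abs_nonneg _)
  -- sum of the kernel over any window is ≤ Kv
  have hsum_k : ∀ n : ℕ, ∑ j ∈ Finset.range (n+1), |k (n-j)| ≤ Kv := by
    intro n
    have h1 : ∑ j ∈ Finset.range (n+1), |k (n-j)| = ∑ j ∈ Finset.range (n+1), |k j| := by
      have := Finset.sum_range_reflect (fun i => |k i|) (n+1)
      simpa using this
    rw [h1]
    exact Summable.sum_le_tsum (Finset.range (n+1)) (fun i _ => abs_nonneg _) hk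
  -- the convolution term bound
  have hconv : ∀ ε C : ℝ, 0 ≤ ε → 0 ≤ C → (∀ y, |f y| ≤ ε * |y| + C) →
      ∀ n, |x (n+1) - H (n+1)| ≤ Kv * (ε * vMax x n + C) := by
    intro ε C hε hC hfb n
    rw [hx n, add_sub_cancel_left]
    calc |∑ j ∈ Finset.range (n+1), k (n-j) * f (x j)|
        ≤ ∑ j ∈ Finset.range (n+1), |k (n-j) * f (x j)| := Finset.abs_sum_le_sum_abs _ _
      _ ≤ ∑ j ∈ Finset.range (n+1), |k (n-j)| * (ε * vMax x n + C) := by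
          apply Finset.sum_le_sum
          intro j hj
          rw [abs_mul]
          apply mul_le_mul_of_nonneg_left _ (abs_nonneg _)
          have h1 := le_vMax x (Nat.lt_succ_iff.mp (Finset.mem_range.mp hj))
          have h2 := hfb (x j)
          nlinarith
      _ = (∑ j ∈ Finset.range (n+1), |k (n-j)|) * (ε * vMax x n + C) := by
          rw [Finset.sum_mul]
      _ ≤ Kv * (ε * vMax x n + C) := by
          apply mul_le_mul_of_nonneg_right (hsum_k n)
          nlinarith [vMax_nonneg x n]
  -- the a-priori bound on the running max of x in terms of that of H
  set ε0 : ℝ := 1/(2*(Kv+1)) with hε0def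
  have hε0pos : 0 < ε0 := by rw [hε0def]; positivity
  obtain ⟨C0, hC00, hC0⟩ := lin_bound f hf hsub ε0 hε0pos
  set D : ℝ := 2*|ξ| + 2*Kv*C0 with hDdef
  have hKC0 : 0 ≤ Kv * C0 := mul_nonneg hKv0 hC00
  have hKvε0 : Kv * ε0 ≤ 1/2 := by
    rw [hε0def, mul_one_div, div_le_iff₀ (by linarith : (0:ℝ) < 2*(Kv+1))]
    linarith
  have hMx : ∀ n, vMax x n ≤ D + 2 * vMax H n := by
    intro n
    induction n with
    | zero =>
      apply vMax_le
      intro j hj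
      have hj0 : j = 0 := Nat.le_zero.mp hj
      subst hj0
      rw [hx0]
      have := vMax_nonneg H 0
      have := abs_nonneg ξ
      rw [hDdef]; linarith
    | succ n ih =>
      apply vMax_le
      intro j hj
      rcases le_or_gt j n with h | h
      · have := le_vMax x h
        have := vMax_mono H (Nat.le_succ n)
        linarith
      · have hj1 : j = n+1 := by omega
        subst hj1
        have h1 := hconv ε0 C0 hε0pos.le hC00 hC0 n
        have h2 : |x (n+1)| ≤ |H (n+1)| + |x (n+1) - H (n+1)| := by
          have := abs_add_le (H (n+1)) (x (n+1) - H (n+1))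
          simpa using this
        have h3 : |H (n+1)| ≤ vMax H (n+1) := le_vMax H le_rfl
        have h5 : Kv * (ε0 * vMax x n + C0) = (Kv*ε0) * vMax x n + Kv * C0 := by ring
        have h6 : (Kv*ε0) * vMax x n ≤ (1/2) * vMax x n :=
          mul_le_mul_of_nonneg_right hKvε0 (vMax_nonneg x n)
        have h7 := vMax_mono H (Nat.le_succ n)
        have h8 := vMax_nonneg H (n+1)
        have h9 := abs_nonneg ξ
        rw [hDdef] at ih ⊢
        linarith
  -- main limit: (a) implies x/H → 1
  have hmain : (Filter.Tendsto H Filter.atTop Filter.atTop ∧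
        ∃ b : ℕ → ℝ, Monotone b ∧ Filter.Tendsto (fun n => H n / b n) Filter.atTop (nhds 1)) →
      Filter.Tendsto (fun n => x n / H n) Filter.atTop (nhds 1) := by
    rintro ⟨hHtop, b, hb, hHb⟩
    obtain ⟨N, hN⟩ := (evmax H b hb hHtop hHb).exists_forall_of_atTop
    obtain ⟨N1, hN1⟩ := (hHtop.eventually_ge_atTop (0:ℝ)).exists_forall_of_atTop
    have claim : ∀ ε > (0:ℝ), ∃ C : ℝ, ∀ᶠ n in atTop, |x n - H n| ≤ ε * H n + C := by
      intro ε hε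
      set ε' : ℝ := ε/(8*(Kv+1)) with hε'def
      have hε'pos : 0 < ε' := by rw [hε'def]; positivity
      obtain ⟨C', hC'0, hC'⟩ := lin_bound f hf hsub ε' hε'pos
      refine ⟨Kv * (ε' * D + C'), ?_⟩
      rw [eventually_atTop]
      refine ⟨N + N1 + 1, fun n hn => ?_⟩
      obtain ⟨m, rfl⟩ : ∃ m, n = m + 1 := ⟨n-1, by omega⟩
      have h1 := hconv ε' C' hε'pos.le hC'0 hC' m
      have h2 := hMx m
      have h3 : vMax H m ≤ 4 * H (m+1) := hN m (by omega)
      have h4 : 0 ≤ H (m+1) := hN1 (m+1) (by omega)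
      have h5 : 8 * Kv * ε' ≤ ε := by
        have heq : 8*Kv*ε' = (8*Kv*ε)/(8*(Kv+1)) := by rw [hε'def]; ring
        rw [heq, div_le_iff₀ (by linarith : (0:ℝ) < 8*(Kv+1))]
        nlinarith
      have h6 : vMax x m ≤ D + 8 * H (m+1) := by linarith
      have h7 : Kv * (ε' * vMax x m + C') ≤ Kv * (ε' * (D + 8*H (m+1)) + C') := by
        apply mul_le_mul_of_nonneg_left _ hKv0
        have := mul_le_mul_of_nonneg_left h6 hε'pos.le
        linarith
      have h8 : (8*Kv*ε') * H (m+1) ≤ ε * H (m+1) := mul_le_mul_of_nonneg_right h5 h4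
      have h9 : Kv * (ε' * (D + 8*H (m+1)) + C') = Kv*(ε' * D + C') + (8*Kv*ε') * H (m+1) := by
        ring
      linarith
    have hq0 := quot_zero (fun n => x n - H n) H hHtop claim
    have h10 : Tendsto (fun n => (x n - H n)/H n + 1) atTop (nhds 1) := by
      have := hq0.add (tendsto_const_nhds : Tendsto (fun _ : ℕ => (1:ℝ)) atTop (nhds 1))
      simpa using this
    have heq : (fun n => (x n - H n)/H n + 1) =ᶠ[atTop] (fun n => x n / H n) := by
      filter_upwards [hHtop.eventually_ge_atTop 1] with n hn
      have hne : H n ≠ 0 := by intro h; rw [h] at hn; linarith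
      field_simp
      ring
    exact Tendsto.congr' heq h10
  constructor
  · constructor
    · -- (a) → (b)
      rintro ha
      obtain ⟨hHtop, b, hb, hHb⟩ := ha
      have hxH := hmain ⟨hHtop, b, hb, hHb⟩
      constructor
      · -- x → ∞
        have h1 : ∀ᶠ n in atTop, H n / 2 ≤ x n := by
          have h2 := Metric.tendsto_nhds.mp hxH (1/2) (by norm_num)
          filter_upwards [h2, hHtop.eventually_ge_atTop 1] with n hn hHn
          rw [Real.dist_eq] at hn
          have h3 : 1/2 < x n / H n := by have := abs_lt.mp hn; linarith [this.1]
          have hH0 : 0 < H n := by linarith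
          rw [lt_div_iff₀ hH0] at h3
          linarith
        exact tendsto_atTop_mono' atTop h1 (hHtop.atTop_div_const two_pos)
      · refine ⟨b, hb, ?_⟩
        have hmul : Tendsto (fun n => (x n / H n) * (H n / b n)) atTop (nhds 1) := by
          have := hxH.mul hHb
          simpa using this
        apply Tendsto.congr' _ hmul
        filter_upwards [hHtop.eventually_ge_atTop 1] with n hn
        have hne : H n ≠ 0 := by intro h; rw [h] at hn; linarith
        rw [div_mul_div_comm, mul_comm (x n) (H n), mul_div_mul_left _ _ hne]
    · -- (b) → (a)
      rintro ⟨hxtop, c, hc, hxc⟩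
      obtain ⟨N, hN⟩ := (evmax x c hc hxtop hxc).exists_forall_of_atTop
      obtain ⟨N1, hN1⟩ := (hxtop.eventually_ge_atTop (0:ℝ)).exists_forall_of_atTop
      have claim : ∀ ε > (0:ℝ), ∃ C : ℝ, ∀ᶠ n in atTop, |x n - H n| ≤ ε * x n + C := by
        intro ε hε
        set ε' : ℝ := ε/(4*(Kv+1)) with hε'def
        have hε'pos : 0 < ε' := by rw [hε'def]; positivity
        obtain ⟨C', hC'0, hC'⟩ := lin_bound f hf hsub ε' hε'pos
        refine ⟨Kv * C', ?_⟩
        rw [eventually_atTop]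
        refine ⟨N + N1 + 1, fun n hn => ?_⟩
        obtain ⟨m, rfl⟩ : ∃ m, n = m + 1 := ⟨n-1, by omega⟩
        have h1 := hconv ε' C' hε'pos.le hC'0 hC' m
        have h3 : vMax x m ≤ 4 * x (m+1) := hN m (by omega)
        have h4 : 0 ≤ x (m+1) := hN1 (m+1) (by omega)
        have h5 : 4 * Kv * ε' ≤ ε := by
          have heq : 4*Kv*ε' = (4*Kv*ε)/(4*(Kv+1)) := by rw [hε'def]; ring
          rw [heq, div_le_iff₀ (by linarith : (0:ℝ) < 4*(Kv+1))]
          nlinarith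
        have h7 : Kv * (ε' * vMax x m + C') ≤ Kv * (ε' * (4*x (m+1)) + C') := by
          apply mul_le_mul_of_nonneg_left _ hKv0
          have := mul_le_mul_of_nonneg_left h3 hε'pos.le
          linarith
        have h8 : (4*Kv*ε') * x (m+1) ≤ ε * x (m+1) := mul_le_mul_of_nonneg_right h5 h4
        have h9 : Kv * (ε' * (4*x (m+1)) + C') = Kv*C' + (4*Kv*ε') * x (m+1) := by ring
        linarith
      have hq0 := quot_zero (fun n => x n - H n) x hxtop claim
      have h10 : Tendsto (fun n => 1 - (x n - H n)/x n) atTop (nhds 1) := by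
        have := (tendsto_const_nhds : Tendsto (fun _ : ℕ => (1:ℝ)) atTop (nhds 1)).sub hq0
        simpa using this
      have hHx : Tendsto (fun n => H n / x n) atTop (nhds 1) := by
        apply Tendsto.congr' _ h10
        filter_upwards [hxtop.eventually_ge_atTop 1] with n hn
        have hne : x n ≠ 0 := by intro h; rw [h] at hn; linarith
        field_simp
        ring
      constructor
      · -- H → ∞
        have h1 : ∀ᶠ n in atTop, x n / 2 ≤ H n := by
          have h2 := Metric.tendsto_nhds.mp hHx (1/2) (by norm_num)
          filter_upwards [h2, hxtop.eventually_ge_atTop 1] with n hn hxn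
          rw [Real.dist_eq] at hn
          have h3 : 1/2 < H n / x n := by have := abs_lt.mp hn; linarith [this.1]
          have hx0' : 0 < x n := by linarith
          rw [lt_div_iff₀ hx0'] at h3
          linarith
        exact tendsto_atTop_mono' atTop h1 (hxtop.atTop_div_const two_pos)
      · refine ⟨c, hc, ?_⟩
        have hmul : Tendsto (fun n => (H n / x n) * (x n / c n)) atTop (nhds 1) := by
          have := hHx.mul hxc
          simpa using this
        apply Tendsto.congr' _ hmul
        filter_upwards [hxtop.eventually_ge_atTop 1] with n hn
        have hne : x n ≠ 0 := by intro h; rw [h] at hn; linarith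
        rw [div_mul_div_comm, mul_comm (H n) (x n), mul_div_mul_left _ _ hne]
  · exact hmain
end

section
/- Under the Volterra equation hypotheses, if there exist increasing sequences a₊(n), a₋(n) → ∞ with limsup |H(n)|/a₊(n) = 0 and limsup |H(n)|/a₋(n) = +∞, then limsup |x(n)|/a₊(n) = 0 and limsup |x(n)|/a₋(n) = +∞. -/
open Filter Finset Topology

private lemma sublin {f : ℝ → ℝ} (hf : Continuous f)
    (hsub : Tendsto (fun y => f y / y) (cocompact ℝ) (nhds 0)) {ε : ℝ} (hε : 0 < ε) :
    ∃ C : ℝ, 0 ≤ C ∧ ∀ y, |f y| ≤ ε * |y| + C := by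
  have h1 : {y : ℝ | |f y / y| < ε} ∈ cocompact ℝ := by
    have := Metric.tendsto_nhds.mp hsub ε hε
    simp only [Real.dist_eq, sub_zero] at this
    exact this
  obtain ⟨t, htc, hts⟩ := mem_cocompact.mp h1
  obtain ⟨R, hR⟩ := htc.isBounded.subset_closedBall 0
  set R' := max R 0 with hR'
  have hRR' : Metric.closedBall (0:ℝ) R ⊆ Metric.closedBall 0 R' :=
    Metric.closedBall_subset_closedBall (le_max_left _ _)
  obtain ⟨C0, hC0⟩ := (isCompact_closedBall (0:ℝ) R').exists_bound_of_continuousOn hf.continuousOn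
  refine ⟨max C0 0, le_max_right _ _, fun y => ?_⟩
  by_cases hy : |y| ≤ R'
  · have h2 : |f y| ≤ C0 := hC0 y (by simpa [Metric.mem_closedBall, Real.dist_eq] using hy)
    nlinarith [abs_nonneg y, le_max_left C0 (0:ℝ), mul_nonneg hε.le (abs_nonneg y)]
  · push_neg at hy
    have hy0 : 0 < |y| := lt_of_le_of_lt (le_max_right R 0) hy
    have hyt : y ∉ t := fun h => by
      have := hRR' (hR h)
      simp [Metric.mem_closedBall, Real.dist_eq] at this
      exact absurd this (not_le.mpr hy)
    have h3 : |f y / y| < ε := hts hyt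
    rw [abs_div, div_lt_iff₀ hy0] at h3
    nlinarith [le_max_right C0 (0:ℝ)]

private lemma sum_est (k : ℕ → ℝ) (f : ℝ → ℝ) (x a : ℕ → ℝ)
    (K ε C B : ℝ) (hK : ∀ n, ∑ j ∈ Finset.range (n+1), |k (n-j)| ≤ K)
    (hfb : ∀ y, |f y| ≤ ε * |y| + C) (hε : 0 ≤ ε) (hC : 0 ≤ C)
    (hamono : Monotone a) (hapos : ∀ n, 0 < a n) (hB : 0 ≤ B)
    (n : ℕ) (hxB : ∀ j, j ≤ n → |x j| ≤ B * a j) :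
    |∑ j ∈ Finset.range (n+1), k (n-j) * f (x j)| ≤ (ε * (B * a (n+1)) + C) * K := by
  have hGnn : 0 ≤ ε * (B * a (n+1)) + C :=
    add_nonneg (mul_nonneg hε (mul_nonneg hB (hapos _).le)) hC
  calc |∑ j ∈ Finset.range (n+1), k (n-j) * f (x j)|
      ≤ ∑ j ∈ Finset.range (n+1), |k (n-j) * f (x j)| := Finset.abs_sum_le_sum_abs _ _
    _ ≤ ∑ j ∈ Finset.range (n+1), |k (n-j)| * (ε * (B * a (n+1)) + C) := by
        apply Finset.sum_le_sum
        intro j hj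
        rw [abs_mul]
        apply mul_le_mul_of_nonneg_left _ (abs_nonneg _)
        have h1 : |f (x j)| ≤ ε * |x j| + C := hfb _
        have hjn : j ≤ n := Nat.lt_succ_iff.mp (Finset.mem_range.mp hj)
        have h2 : |x j| ≤ B * a j := hxB j hjn
        have h3 : a j ≤ a (n+1) := hamono (by omega : j ≤ n+1)
        nlinarith [mul_le_mul_of_nonneg_left h2 hε, mul_le_mul_of_nonneg_left h3 (mul_nonneg hε hB)]
    _ = (∑ j ∈ Finset.range (n+1), |k (n-j)|) * (ε * (B * a (n+1)) + C) := by
        rw [Finset.sum_mul]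
    _ ≤ K * (ε * (B * a (n+1)) + C) := mul_le_mul_of_nonneg_right (hK n) hGnn
    _ = (ε * (B * a (n+1)) + C) * K := mul_comm _ _

theorem stmt13
(f : ℝ → ℝ) (k H x : ℕ → ℝ) (ξ : ℝ)
    (hf : Continuous f)
    (hsub : Filter.Tendsto (fun y => f y / y) (Filter.cocompact ℝ) (nhds 0))
    (hk : Summable (fun j => |k j|))
    (hx0 : x 0 = ξ)
    (hx : ∀ n : ℕ, x (n + 1) = H (n + 1) + ∑ j ∈ Finset.range (n + 1), k (n - j) * f (x j))
    (ap am : ℕ → ℝ)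
    (hpmono : Monotone ap) (hppos : ∀ n, 0 < ap n)
    (hptop : Filter.Tendsto ap Filter.atTop Filter.atTop)
    (hmmono : Monotone am) (hmpos : ∀ n, 0 < am n)
    (hmtop : Filter.Tendsto am Filter.atTop Filter.atTop)
    (hHp : Filter.limsup (fun n => ((|H n| / ap n : ℝ) : EReal)) Filter.atTop = 0)
    (hHm : Filter.limsup (fun n => ((|H n| / am n : ℝ) : EReal)) Filter.atTop = ⊤) :
    Filter.limsup (fun n => ((|x n| / ap n : ℝ) : EReal)) Filter.atTop = 0 ∧
      Filter.limsup (fun n => ((|x n| / am n : ℝ) : EReal)) Filter.atTop = ⊤ := by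
  set K := ∑' i, |k i| with hKdef
  have hKnn : 0 ≤ K := tsum_nonneg (fun i => abs_nonneg _)
  have hKsum : ∀ n, ∑ j ∈ Finset.range (n+1), |k (n-j)| ≤ K := by
    intro n
    have h := Finset.sum_range_reflect (fun j => |k j|) (n+1)
    simp only [Nat.add_sub_cancel] at h
    calc ∑ j ∈ Finset.range (n+1), |k (n-j)| = ∑ j ∈ Finset.range (n+1), |k j| := h
      _ ≤ K := Summable.sum_le_tsum _ (fun i _ => abs_nonneg _) hk
  have hHsmall : ∀ b : ℝ, 0 < b → ∀ᶠ n in atTop, |H n| ≤ b * ap n := by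
    intro b hb
    have h2 : Filter.limsup (fun n => ((|H n| / ap n : ℝ) : EReal)) Filter.atTop < (b : EReal) := by
      rw [hHp]; exact_mod_cast hb
    filter_upwards [Filter.eventually_lt_of_limsup_lt h2] with n hn
    have h3 : |H n| / ap n < b := by exact_mod_cast hn
    have h4 := (div_lt_iff₀ (hppos n)).mp h3
    linarith
  -- Step A : global linear bound against ap
  obtain ⟨B, hBpos, hxB⟩ : ∃ B : ℝ, 0 < B ∧ ∀ n, |x n| ≤ B * ap n := by
    set ε0 : ℝ := 1 / (2 * (K + 1)) with hε0def
    have hε0 : 0 < ε0 := by positivity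
    obtain ⟨C0, hC0nn, hC0⟩ := sublin hf hsub hε0
    have hε0K : ε0 * K ≤ 1/2 := by
      rw [hε0def, div_mul_eq_mul_div, one_mul, div_le_div_iff₀ (by positivity) (by norm_num)]
      nlinarith
    obtain ⟨n0, hn0⟩ := Filter.eventually_atTop.mp (hHsmall 1 one_pos)
    set B0 : ℝ := (Finset.Icc 0 n0).sup' (Finset.nonempty_Icc.mpr (Nat.zero_le n0))
      (fun j => |x j| / ap j) with hB0def
    set B : ℝ := max B0 (2 * (1 + C0 * K / ap 0)) with hBdef
    have hB2 : 2 * (1 + C0 * K / ap 0) ≤ B := le_max_right _ _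
    have hCK0 : 0 ≤ C0 * K / ap 0 := div_nonneg (mul_nonneg hC0nn hKnn) (hppos 0).le
    have hBpos : 0 < B := lt_of_lt_of_le (by linarith) hB2
    refine ⟨B, hBpos, ?_⟩
    intro n
    induction n using Nat.strong_induction_on with
    | _ n IH =>
      by_cases hcase : n ≤ n0
      · have h1 : |x n| / ap n ≤ B0 := Finset.le_sup' (fun j => |x j| / ap j) (Finset.mem_Icc.mpr ⟨Nat.zero_le n, hcase⟩)
        have h2 : |x n| / ap n ≤ B := le_trans h1 (le_max_left _ _)
        calc |x n| = (|x n| / ap n) * ap n := (div_mul_cancel₀ _ (hppos n).ne').symm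
          _ ≤ B * ap n := mul_le_mul_of_nonneg_right h2 (hppos n).le
      · push_neg at hcase
        obtain ⟨m, rfl⟩ : ∃ m, n = m + 1 := ⟨n - 1, by omega⟩
        have hsum := sum_est k f x ap K ε0 C0 B hKsum hC0 hε0.le hC0nn hpmono hppos hBpos.le m
          (fun j hj => IH j (by omega))
        have hH1 : |H (m+1)| ≤ 1 * ap (m+1) := hn0 (m+1) (by omega)
        have hxa : |x (m+1)| ≤ |H (m+1)| + (ε0 * (B * ap (m+1)) + C0) * K := by
          rw [hx m]
          calc |H (m+1) + ∑ j ∈ Finset.range (m+1), k (m-j) * f (x j)|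
              ≤ |H (m+1)| + |∑ j ∈ Finset.range (m+1), k (m-j) * f (x j)| := abs_add_le _ _
            _ ≤ _ := by linarith
        have hap01 : ap 0 ≤ ap (m+1) := hpmono (Nat.zero_le _)
        have e2 : C0 * K / ap 0 ≤ B/2 - 1 := by linarith
        have e2nn : 0 ≤ C0 * K / ap 0 := by positivity
        have e3 : C0 * K ≤ (B/2 - 1) * ap (m+1) := by
          calc C0 * K = (C0 * K / ap 0) * ap 0 := (div_mul_cancel₀ _ (hppos 0).ne').symm
            _ ≤ (B/2 - 1) * ap (m+1) := mul_le_mul e2 hap01 (hppos 0).le (by linarith)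
        have e4 : ε0 * (B * ap (m+1)) * K ≤ (1/2) * (B * ap (m+1)) := by
          calc ε0 * (B * ap (m+1)) * K = (ε0 * K) * (B * ap (m+1)) := by ring
            _ ≤ (1/2) * (B * ap (m+1)) := mul_le_mul_of_nonneg_right hε0K (mul_nonneg hBpos.le (hppos _).le)
        nlinarith [hppos (m+1)]
  -- Step B : eventual smallness of |x|/ap
  have hevδ : ∀ δ : ℝ, 0 < δ → ∀ᶠ n in atTop, |x n| / ap n ≤ δ := by
    intro δ hδ
    set ε1 : ℝ := δ / (3 * (B * K + 1)) with hε1def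
    have hBK : 0 ≤ B * K := mul_nonneg hBpos.le hKnn
    have hε1 : 0 < ε1 := div_pos hδ (by nlinarith)
    obtain ⟨C1, hC1nn, hC1⟩ := sublin hf hsub hε1
    have hε1BK : ε1 * (B * K) ≤ δ / 3 := by
      rw [hε1def, div_mul_eq_mul_div, div_le_div_iff₀ (by positivity) (by norm_num)]
      nlinarith
    have hev1 := hHsmall (δ/3) (by positivity)
    have hev2 : ∀ᶠ n in atTop, C1 * K ≤ (δ/3) * ap n := by
      filter_upwards [hptop.eventually_ge_atTop (3 * (C1 * K) / δ)] with n hn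
      rw [div_le_iff₀ hδ] at hn
      nlinarith
    obtain ⟨N, hN⟩ := Filter.eventually_atTop.mp (hev1.and hev2)
    rw [Filter.eventually_atTop]
    refine ⟨N + 1, fun n hn => ?_⟩
    obtain ⟨m, rfl⟩ : ∃ m, n = m + 1 := ⟨n - 1, by omega⟩
    obtain ⟨hH1, hH2⟩ := hN (m+1) (by omega)
    have hsum := sum_est k f x ap K ε1 C1 B hKsum hC1 hε1.le hC1nn hpmono hppos hBpos.le m
      (fun j _ => hxB j)
    have hxa : |x (m+1)| ≤ |H (m+1)| + (ε1 * (B * ap (m+1)) + C1) * K := by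
      rw [hx m]
      calc |H (m+1) + ∑ j ∈ Finset.range (m+1), k (m-j) * f (x j)|
          ≤ |H (m+1)| + |∑ j ∈ Finset.range (m+1), k (m-j) * f (x j)| := abs_add_le _ _
        _ ≤ _ := by linarith
    have e4 : ε1 * (B * ap (m+1)) * K ≤ (δ/3) * ap (m+1) := by
      calc ε1 * (B * ap (m+1)) * K = (ε1 * (B * K)) * ap (m+1) := by ring
        _ ≤ (δ/3) * ap (m+1) := mul_le_mul_of_nonneg_right hε1BK (hppos _).le
    rw [div_le_iff₀ (hppos (m+1))]
    nlinarith
  have part1 : Filter.limsup (fun n => ((|x n| / ap n : ℝ) : EReal)) Filter.atTop = 0 := by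
    apply le_antisymm
    · by_contra hlt
      rw [not_le] at hlt
      obtain ⟨δ, h0δ, hδL⟩ := EReal.exists_between_coe_real hlt
      have hδ : (0:ℝ) < δ := by exact_mod_cast h0δ
      have hle : Filter.limsup (fun n => ((|x n| / ap n : ℝ) : EReal)) Filter.atTop ≤ (δ : EReal) := by
        refine Filter.limsup_le_of_le (by isBoundedDefault) ?_
        filter_upwards [hevδ δ hδ] with n hn
        exact_mod_cast hn
      exact absurd (lt_of_le_of_lt hle hδL) (lt_irrefl _)
    · calc (0 : EReal) = Filter.limsup (fun _ : ℕ => (0:EReal)) Filter.atTop :=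
            (Filter.limsup_const _).symm
        _ ≤ _ := Filter.limsup_le_limsup (Filter.Eventually.of_forall (fun n => by
            simpa using (EReal.coe_nonneg.mpr (div_nonneg (abs_nonneg _) (hppos n).le))))
  refine ⟨part1, ?_⟩
  -- Part 2
  by_contra h2
  have hlt : Filter.limsup (fun n => ((|x n| / am n : ℝ) : EReal)) Filter.atTop < ⊤ := Ne.lt_top h2
  obtain ⟨c, hc1, _⟩ := EReal.exists_between_coe_real hlt
  have hev : ∀ᶠ n in atTop, |x n| / am n < c := by
    filter_upwards [Filter.eventually_lt_of_limsup_lt hc1] with n hn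
    exact_mod_cast hn
  obtain ⟨N, hN⟩ := Filter.eventually_atTop.mp hev
  set S : ℝ := max c ((Finset.Icc 0 N).sup' (Finset.nonempty_Icc.mpr (Nat.zero_le N))
    (fun j => |x j| / am j)) with hSdef
  have hSb : ∀ n, |x n| / am n ≤ S := by
    intro n
    by_cases hn : n ≤ N
    · exact le_trans (Finset.le_sup' (fun j => |x j| / am j) (Finset.mem_Icc.mpr ⟨Nat.zero_le n, hn⟩)) (le_max_right _ _)
    · exact le_trans (hN n (by omega)).le (le_max_left _ _)
  have hSnn : 0 ≤ S := le_trans (div_nonneg (abs_nonneg _) (hmpos 0).le) (hSb 0)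
  have hxS : ∀ n, |x n| ≤ S * am n := fun n => by
    have h5 := hSb n; rw [div_le_iff₀ (hmpos n)] at h5; linarith
  obtain ⟨C1, hC1nn, hC1⟩ := sublin hf hsub one_pos
  have hHb : ∀ n, |H n| / am n ≤ max (S + S * K + C1 * K / am 0) (|H 0| / am 0) := by
    intro n
    match n with
    | 0 => exact le_max_right _ _
    | (m+1) =>
      have hsum := sum_est k f x am K 1 C1 S hKsum hC1 one_pos.le hC1nn hmmono hmpos hSnn m
        (fun j _ => hxS j)
      have hHa : |H (m+1)| ≤ |x (m+1)| + (1 * (S * am (m+1)) + C1) * K := by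
        have hxeq := hx m
        have heq : H (m+1) = x (m+1) - ∑ j ∈ Finset.range (m+1), k (m-j) * f (x j) := by
          linarith
        rw [heq]
        calc |x (m+1) - ∑ j ∈ Finset.range (m+1), k (m-j) * f (x j)|
            ≤ |x (m+1)| + |∑ j ∈ Finset.range (m+1), k (m-j) * f (x j)| := abs_sub _ _
          _ ≤ _ := by linarith
      refine le_trans ?_ (le_max_left _ _)
      rw [div_le_iff₀ (hmpos (m+1))]
      have ham : am 0 ≤ am (m+1) := hmmono (Nat.zero_le _)
      have hc1k : C1 * K ≤ (C1 * K / am 0) * am (m+1) := by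
        calc C1 * K = (C1 * K / am 0) * am 0 := (div_mul_cancel₀ _ (hmpos 0).ne').symm
          _ ≤ (C1 * K / am 0) * am (m+1) := mul_le_mul_of_nonneg_left ham
              (div_nonneg (mul_nonneg hC1nn hKnn) (hmpos 0).le)
      have hxm : |x (m+1)| ≤ S * am (m+1) := hxS (m+1)
      have hskK : 0 ≤ K := hKnn
      nlinarith [mul_nonneg (mul_nonneg hSnn (hmpos (m+1)).le) hKnn]
  have hfin : Filter.limsup (fun n => ((|H n| / am n : ℝ) : EReal)) Filter.atTop ≤
      ((max (S + S * K + C1 * K / am 0) (|H 0| / am 0) : ℝ) : EReal) := by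
    refine Filter.limsup_le_of_le (by isBoundedDefault) ?_
    exact Filter.Eventually.of_forall (fun n => by exact_mod_cast hHb n)
  rw [hHm] at hfin
  exact absurd hfin (not_le.mpr (EReal.coe_lt_top _))
end

section
/- Under the Volterra equation hypotheses, let φ : [0,∞) → [0,∞) be increasing and convex, and p ≥ 1 with φ(x) = x^p. Then limsup_{n→∞} (1/n) ∑_{j=1}^n |H(j)|^p < ∞ if and only if limsup_{n→∞} (1/n) ∑_{j=1}^n |x(j)|^p < ∞. -/
open Filter Finset Topology

lemma sublin18 {f : ℝ → ℝ} (hf : Continuous f)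
    (hsub : Filter.Tendsto (fun y => f y / y) (Filter.cocompact ℝ) (nhds 0)) :
    ∀ ε : ℝ, 0 < ε → ∃ C : ℝ, 0 ≤ C ∧ ∀ y, |f y| ≤ ε * |y| + C := by
  intro ε hε
  have h1 : (fun y => f y / y) ⁻¹' Metric.ball 0 ε ∈ Filter.cocompact ℝ :=
    hsub (Metric.ball_mem_nhds (0:ℝ) hε)
  rw [mem_cocompact] at h1
  obtain ⟨t, ht, hts⟩ := h1
  obtain ⟨R, hR⟩ := ht.isBounded.subset_closedBall 0
  set R' : ℝ := max R 0 with hR'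
  obtain ⟨C, hC⟩ := (isCompact_Icc (a := -(R'+1)) (b := R'+1)).exists_bound_of_continuousOn
    hf.continuousOn
  refine ⟨max C 0, le_max_right _ _, fun y => ?_⟩
  rcases le_or_gt |y| (R'+1) with h | h
  · have hy : y ∈ Set.Icc (-(R'+1)) (R'+1) := abs_le.mp h
    have hCy : |f y| ≤ C := by simpa [Real.norm_eq_abs] using hC y hy
    have h2 : 0 ≤ ε * |y| := mul_nonneg hε.le (abs_nonneg _)
    have h4 : C ≤ max C 0 := le_max_left _ _
    linarith
  · have hRnn : (0:ℝ) ≤ R' := le_max_right _ _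
    have hy0 : y ≠ 0 := by
      intro h0; rw [h0] at h; simp at h; linarith
    have hyt : y ∉ t := by
      intro hyt
      have := hR hyt
      rw [Metric.mem_closedBall, Real.dist_eq, sub_zero] at this
      have : |y| ≤ R' := le_trans this (le_max_left _ _)
      linarith
    have h2 : |f y| / |y| < ε := by
      have := hts hyt
      simpa [Real.dist_eq] using this
    have hyabs : |y| ≠ 0 := abs_ne_zero.mpr hy0
    have h3 : |f y| = |f y| / |y| * |y| := by field_simp
    have h5 : |f y| ≤ ε * |y| := by
      rw [h3]; exact mul_le_mul_of_nonneg_right h2.le (abs_nonneg _)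
    have h4 : (0:ℝ) ≤ max C 0 := le_max_right _ _
    linarith

lemma jensen18 {p : ℝ} (hp : 1 ≤ p) {K : ℝ} (s : Finset ℕ) (a b : ℕ → ℝ)
    (ha : ∀ i, 0 ≤ a i) (hb : ∀ i, 0 ≤ b i) (hK : ∑ i ∈ s, a i ≤ K) :
    (∑ i ∈ s, a i * b i) ^ p ≤ K ^ (p - 1) * ∑ i ∈ s, a i * b i ^ p := by
  have hp0 : (0:ℝ) < p := lt_of_lt_of_le one_pos hp
  have hA : (0:ℝ) ≤ ∑ i ∈ s, a i := Finset.sum_nonneg fun i _ => ha i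
  have hKnn : (0:ℝ) ≤ K := le_trans hA hK
  have hX : (0:ℝ) ≤ ∑ i ∈ s, a i * b i ^ p :=
    Finset.sum_nonneg fun i _ => mul_nonneg (ha i) (Real.rpow_nonneg (hb i) p)
  have hh := Real.inner_le_weight_mul_Lp_of_nonneg s hp a b ha hb
  have hLnn : (0:ℝ) ≤ ∑ i ∈ s, a i * b i :=
    Finset.sum_nonneg fun i _ => mul_nonneg (ha i) (hb i)
  have h2 : (∑ i ∈ s, a i * b i) ^ p ≤
      ((∑ i ∈ s, a i) ^ (1 - p⁻¹) * (∑ i ∈ s, a i * b i ^ p) ^ p⁻¹) ^ p :=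
    Real.rpow_le_rpow hLnn hh hp0.le
  have h3 : ((∑ i ∈ s, a i) ^ (1 - p⁻¹) * (∑ i ∈ s, a i * b i ^ p) ^ p⁻¹) ^ p
      = (∑ i ∈ s, a i) ^ (p - 1) * ∑ i ∈ s, a i * b i ^ p := by
    rw [Real.mul_rpow (Real.rpow_nonneg hA _) (Real.rpow_nonneg hX _),
      ← Real.rpow_mul hA, ← Real.rpow_mul hX]
    have e1 : (1 - p⁻¹) * p = p - 1 := by field_simp
    have e2 : p⁻¹ * p = 1 := inv_mul_cancel₀ hp0.ne'
    rw [e1, e2, Real.rpow_one]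
  have h4 : (∑ i ∈ s, a i) ^ (p - 1) ≤ K ^ (p - 1) :=
    Real.rpow_le_rpow hA hK (by linarith)
  calc (∑ i ∈ s, a i * b i) ^ p ≤ (∑ i ∈ s, a i) ^ (p - 1) * ∑ i ∈ s, a i * b i ^ p := by
        rw [← h3]; exact h2
    _ ≤ K ^ (p - 1) * ∑ i ∈ s, a i * b i ^ p := mul_le_mul_of_nonneg_right h4 hX


lemma two_rpow18 {p : ℝ} (hp : 1 ≤ p) {u v : ℝ} (hu : 0 ≤ u) (hv : 0 ≤ v) :
    (u + v) ^ p ≤ 2 ^ (p - 1) * (u ^ p + v ^ p) := by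
  lift u to NNReal using hu
  lift v to NNReal using hv
  have := NNReal.rpow_add_le_mul_rpow_add_rpow u v hp
  exact_mod_cast this

lemma convp18 {p : ℝ} (hp : 1 ≤ p) (k : ℕ → ℝ) (hk : Summable fun j => |k j|)
    (g z : ℕ → ℝ) (hg : ∀ j, 0 ≤ g j) (hz : ∀ j, 0 ≤ z j)
    (ε C : ℝ) (hε : 0 ≤ ε) (hC : 0 ≤ C) (hgz : ∀ j, g j ≤ ε * z j + C) (N : ℕ) :
    ∑ m ∈ Finset.range N, (∑ j ∈ Finset.range (m+1), |k (m - j)| * g j) ^ p ≤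
      (∑' m, |k m|) ^ (p-1) * (∑' m, |k m|) *
        (2 ^ (p-1) * (ε ^ p * ∑ j ∈ Finset.range N, z j ^ p + N * C ^ p)) := by
  have hp0 : (0:ℝ) < p := lt_of_lt_of_le one_pos hp
  set K : ℝ := ∑' m, |k m| with hKdef
  have hKfin : ∀ s : Finset ℕ, ∑ i ∈ s, |k i| ≤ K :=
    fun s => Summable.sum_le_tsum s (fun i _ => abs_nonneg _) hk
  have hKnn : (0:ℝ) ≤ K := by simpa using hKfin ∅
  have hKp : (0:ℝ) ≤ K ^ (p-1) := Real.rpow_nonneg hKnn _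
  -- Step 1: rowwise Jensen
  have step1 : ∀ m : ℕ, (∑ j ∈ Finset.range (m+1), |k (m - j)| * g j) ^ p ≤
      K ^ (p-1) * ∑ j ∈ Finset.range (m+1), |k (m - j)| * g j ^ p := by
    intro m
    refine jensen18 hp _ _ _ (fun i => abs_nonneg _) hg ?_
    have := Finset.sum_range_reflect (fun j => |k j|) (m+1)
    calc ∑ j ∈ Finset.range (m+1), |k (m - j)|
        = ∑ j ∈ Finset.range (m+1), |k j| := by
          rw [← this]; apply Finset.sum_congr rfl; intro j hj; norm_num
      _ ≤ K := hKfin _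
  -- Step 2: swap the double sum
  have step2 : ∑ m ∈ Finset.range N, ∑ j ∈ Finset.range (m+1), |k (m - j)| * g j ^ p ≤
      K * ∑ j ∈ Finset.range N, g j ^ p := by
    have hswap := Finset.sum_Ico_Ico_comm 0 N (fun i j => |k (j - i)| * g i ^ p)
    have hL : ∑ m ∈ Finset.range N, ∑ j ∈ Finset.range (m+1), |k (m - j)| * g j ^ p
        = ∑ i ∈ Finset.Ico 0 N, ∑ j ∈ Finset.Ico i N, |k (j - i)| * g i ^ p := by
      rw [hswap]
      simp only [Finset.range_eq_Ico]
    rw [hL]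
    have : ∀ i ∈ Finset.Ico 0 N, ∑ j ∈ Finset.Ico i N, |k (j - i)| * g i ^ p
        ≤ g i ^ p * K := by
      intro i _
      have h1 : ∑ j ∈ Finset.Ico i N, |k (j - i)| * g i ^ p
          = g i ^ p * ∑ j ∈ Finset.Ico i N, |k (j - i)| := by
        rw [Finset.mul_sum]; apply Finset.sum_congr rfl; intro j _; ring
      rw [h1]
      have h2 : ∑ j ∈ Finset.Ico i N, |k (j - i)| = ∑ t ∈ Finset.range (N - i), |k t| := by
        rw [Finset.sum_Ico_eq_sum_range]
        apply Finset.sum_congr rfl; intro t _; norm_num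
      have h3 : ∑ j ∈ Finset.Ico i N, |k (j - i)| ≤ K := by rw [h2]; exact hKfin _
      exact mul_le_mul_of_nonneg_left h3 (Real.rpow_nonneg (hg i) p)
    calc ∑ i ∈ Finset.Ico 0 N, ∑ j ∈ Finset.Ico i N, |k (j - i)| * g i ^ p
        ≤ ∑ i ∈ Finset.Ico 0 N, g i ^ p * K := Finset.sum_le_sum this
      _ = K * ∑ j ∈ Finset.range N, g j ^ p := by
          rw [Finset.range_eq_Ico, Finset.mul_sum]
          apply Finset.sum_congr rfl; intro j _; ring
  -- Step 3: pointwise bound on g^p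
  have step3 : ∑ j ∈ Finset.range N, g j ^ p ≤
      2 ^ (p-1) * (ε ^ p * ∑ j ∈ Finset.range N, z j ^ p + N * C ^ p) := by
    have hpt : ∀ j, g j ^ p ≤ 2 ^ (p-1) * (ε ^ p * z j ^ p + C ^ p) := by
      intro j
      have h1 : g j ^ p ≤ (ε * z j + C) ^ p :=
        Real.rpow_le_rpow (hg j) (hgz j) hp0.le
      have h2 : (ε * z j + C) ^ p ≤ 2 ^ (p-1) * ((ε * z j) ^ p + C ^ p) :=
        two_rpow18 hp (mul_nonneg hε (hz j)) hC
      have h3 : (ε * z j) ^ p = ε ^ p * z j ^ p := Real.mul_rpow hε (hz j)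
      rw [h3] at h2; linarith
    calc ∑ j ∈ Finset.range N, g j ^ p
        ≤ ∑ j ∈ Finset.range N, 2 ^ (p-1) * (ε ^ p * z j ^ p + C ^ p) :=
          Finset.sum_le_sum (fun j _ => hpt j)
      _ = 2 ^ (p-1) * (ε ^ p * ∑ j ∈ Finset.range N, z j ^ p + N * C ^ p) := by
          rw [← Finset.mul_sum, Finset.sum_add_distrib, ← Finset.mul_sum, Finset.sum_const,
            Finset.card_range, nsmul_eq_mul]
  -- assemble
  have hGnn : (0:ℝ) ≤ ∑ j ∈ Finset.range N, g j ^ p :=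
    Finset.sum_nonneg fun j _ => Real.rpow_nonneg (hg j) p
  calc ∑ m ∈ Finset.range N, (∑ j ∈ Finset.range (m+1), |k (m - j)| * g j) ^ p
      ≤ ∑ m ∈ Finset.range N, K ^ (p-1) * ∑ j ∈ Finset.range (m+1), |k (m - j)| * g j ^ p :=
        Finset.sum_le_sum (fun m _ => step1 m)
    _ = K ^ (p-1) * ∑ m ∈ Finset.range N, ∑ j ∈ Finset.range (m+1), |k (m - j)| * g j ^ p := by
        rw [Finset.mul_sum]
    _ ≤ K ^ (p-1) * (K * ∑ j ∈ Finset.range N, g j ^ p) := by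
        exact mul_le_mul_of_nonneg_left step2 hKp
    _ ≤ K ^ (p-1) * (K * (2 ^ (p-1) * (ε ^ p * ∑ j ∈ Finset.range N, z j ^ p + N * C ^ p))) := by
        apply mul_le_mul_of_nonneg_left _ hKp
        exact mul_le_mul_of_nonneg_left step3 hKnn
    _ = K ^ (p-1) * K * (2 ^ (p-1) * (ε ^ p * ∑ j ∈ Finset.range N, z j ^ p + N * C ^ p)) := by
        ring

lemma limsup_iff_linear18 (c : ℕ → ℝ) (hc : ∀ n, 0 ≤ c n) (hmono : Monotone c) :
    Filter.limsup (fun n : ℕ => ((1 / (n : ℝ) * c n : ℝ) : EReal)) Filter.atTop < ⊤ ↔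
      ∃ M : ℝ, 0 ≤ M ∧ ∀ n : ℕ, c n ≤ M * n + M := by
  constructor
  · intro h
    obtain ⟨b, hb1, -⟩ := EReal.lt_iff_exists_real_btwn.mp h
    have hev : ∀ᶠ n : ℕ in atTop, ((1 / (n : ℝ) * c n : ℝ) : EReal) < (b : EReal) :=
      Filter.eventually_lt_of_limsup_lt hb1
    obtain ⟨n0, hn0⟩ := Filter.eventually_atTop.mp hev
    set n1 : ℕ := max n0 1 with hn1
    have hM0 : (0:ℝ) ≤ max b 0 + c n1 := add_nonneg (le_max_right _ _) (hc n1)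
    refine ⟨max b 0 + c n1, hM0, fun n => ?_⟩
    rcases le_or_gt n1 n with hn | hn
    · have hn' : n0 ≤ n := le_trans (le_max_left _ _) hn
      have h1n : (1:ℕ) ≤ n := le_trans (le_max_right _ _) hn
      have hnp : (0:ℝ) < (n:ℝ) := by exact_mod_cast h1n
      have := hn0 n hn'
      have h2 : 1 / (n:ℝ) * c n < b := EReal.coe_lt_coe_iff.mp this
      have h3 : c n < b * n := by
        rw [one_div, inv_mul_lt_iff₀ hnp] at h2
        linarith [h2]
      have h4 : b * n ≤ max b 0 * n := mul_le_mul_of_nonneg_right (le_max_left _ _) hnp.le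
      have h5 : (0:ℝ) ≤ c n1 * n := mul_nonneg (hc n1) hnp.le
      have h6 : (0:ℝ) ≤ c n1 := hc n1
      nlinarith [hnp.le]
    · have h1 : c n ≤ c n1 := hmono hn.le
      have h2 : (0:ℝ) ≤ (max b 0 + c n1) * n := mul_nonneg hM0 (Nat.cast_nonneg n)
      have h3 : (0:ℝ) ≤ max b 0 := le_max_right _ _
      linarith
  · rintro ⟨M, hM, hb⟩
    have hev : ∀ᶠ n : ℕ in atTop, (fun n : ℕ => ((1 / (n : ℝ) * c n : ℝ) : EReal)) n
        ≤ ((2 * M : ℝ) : EReal) := by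
      filter_upwards [Filter.eventually_ge_atTop 1] with n hn
      have hnp : (0:ℝ) < (n:ℝ) := by exact_mod_cast hn
      rw [EReal.coe_le_coe_iff]
      have h1 : 1 / (n:ℝ) * c n ≤ 1 / (n:ℝ) * (M * n + M) :=
        mul_le_mul_of_nonneg_left (hb n) (by positivity)
      have h2 : 1 / (n:ℝ) * (M * n + M) = M + M / n := by field_simp
      have h3 : M / n ≤ M := div_le_self hM (by exact_mod_cast hn)
      linarith
    calc Filter.limsup (fun n : ℕ => ((1 / (n : ℝ) * c n : ℝ) : EReal)) Filter.atTop
        ≤ ((2 * M : ℝ) : EReal) := Filter.limsup_le_of_le (by isBoundedDefault) hev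
      _ < ⊤ := EReal.coe_lt_top _

theorem stmt18
(f : ℝ → ℝ) (k H x : ℕ → ℝ) (ξ : ℝ)
    (hf : Continuous f)
    (hsub : Filter.Tendsto (fun y => f y / y) (Filter.cocompact ℝ) (nhds 0))
    (hk : Summable (fun j => |k j|))
    (hx0 : x 0 = ξ)
    (hx : ∀ n : ℕ, x (n + 1) = H (n + 1) + ∑ j ∈ Finset.range (n + 1), k (n - j) * f (x j))
    (p : ℝ) (hp : 1 ≤ p) :
    Filter.limsup
      (fun n : ℕ => ((1 / (n : ℝ) * ∑ j ∈ Finset.Icc 1 n, |H j| ^ p : ℝ) : EReal))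
      Filter.atTop < ⊤ ↔
    Filter.limsup
      (fun n : ℕ => ((1 / (n : ℝ) * ∑ j ∈ Finset.Icc 1 n, |x j| ^ p : ℝ) : EReal))
      Filter.atTop < ⊤ := by
  have hp0 : (0:ℝ) < p := lt_of_lt_of_le one_pos hp
  set K : ℝ := ∑' m, |k m| with hKdef
  have hKnn : (0:ℝ) ≤ K := tsum_nonneg (fun m => abs_nonneg _)
  set B : ℝ := 2 ^ (p-1) with hBdef
  have hB : (0:ℝ) < B := Real.rpow_pos_of_pos two_pos _
  set KK : ℝ := K ^ (p-1) * K with hKKdef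
  have hKK : (0:ℝ) ≤ KK := mul_nonneg (Real.rpow_nonneg hKnn _) hKnn
  set D : ℝ := B * (KK * B) with hDdef
  have hD : (0:ℝ) ≤ D := mul_nonneg hB.le (mul_nonneg hKK hB.le)
  -- shift of sums
  have hshift : ∀ (h : ℕ → ℝ) (n : ℕ), ∑ j ∈ Finset.Icc 1 n, |h j| ^ p
      = ∑ m ∈ Finset.range n, |h (m+1)| ^ p := by
    intro h n
    rw [← Finset.Ico_add_one_right_eq_Icc, Finset.sum_Ico_eq_sum_range]
    simp [add_comm]
  have hnn : ∀ (h : ℕ → ℝ) (n : ℕ), (0:ℝ) ≤ ∑ j ∈ Finset.Icc 1 n, |h j| ^ p :=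
    fun h n => Finset.sum_nonneg fun j _ => Real.rpow_nonneg (abs_nonneg _) _
  have hmono : ∀ (h : ℕ → ℝ), Monotone (fun n => ∑ j ∈ Finset.Icc 1 n, |h j| ^ p) := by
    intro h n m hnm
    apply Finset.sum_le_sum_of_subset_of_nonneg (Finset.Icc_subset_Icc_right hnm)
    intro j _ _; exact Real.rpow_nonneg (abs_nonneg _) _
  -- the convolution majorant
  set conv : ℕ → ℝ := fun m => ∑ j ∈ Finset.range (m+1), |k (m - j)| * |f (x j)| with hconv
  have hconvnn : ∀ m, 0 ≤ conv m :=
    fun m => Finset.sum_nonneg fun j _ => mul_nonneg (abs_nonneg _) (abs_nonneg _)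
  have hR : ∀ m : ℕ, |∑ j ∈ Finset.range (m+1), k (m - j) * f (x j)| ≤ conv m := by
    intro m
    calc |∑ j ∈ Finset.range (m+1), k (m - j) * f (x j)|
        ≤ ∑ j ∈ Finset.range (m+1), |k (m - j) * f (x j)| := Finset.abs_sum_le_sum_abs _ _
      _ = conv m := by apply Finset.sum_congr rfl; intro j _; rw [abs_mul]
  -- key linear estimate
  have key : ∀ (u v : ℕ → ℝ), (∀ m : ℕ, |u (m+1)| ≤ |v (m+1)| + conv m) →
      ∀ ε C : ℝ, 0 ≤ ε → 0 ≤ C → (∀ y, |f y| ≤ ε * |y| + C) → ∀ N : ℕ,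
      ∑ m ∈ Finset.range N, |u (m+1)| ^ p ≤
        B * ∑ m ∈ Finset.range N, |v (m+1)| ^ p +
        D * (ε ^ p * (|ξ| ^ p + ∑ m ∈ Finset.range N, |x (m+1)| ^ p) + N * C ^ p) := by
    intro u v huv ε C hε hC hb N
    have term : ∀ m : ℕ, |u (m+1)| ^ p ≤ B * (|v (m+1)| ^ p + conv m ^ p) := by
      intro m
      calc |u (m+1)| ^ p ≤ (|v (m+1)| + conv m) ^ p :=
            Real.rpow_le_rpow (abs_nonneg _) (huv m) hp0.le
        _ ≤ B * (|v (m+1)| ^ p + conv m ^ p) := two_rpow18 hp (abs_nonneg _) (hconvnn m)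
    have h1 : ∑ m ∈ Finset.range N, |u (m+1)| ^ p ≤
        B * ∑ m ∈ Finset.range N, |v (m+1)| ^ p + B * ∑ m ∈ Finset.range N, conv m ^ p := by
      calc ∑ m ∈ Finset.range N, |u (m+1)| ^ p
          ≤ ∑ m ∈ Finset.range N, B * (|v (m+1)| ^ p + conv m ^ p) :=
            Finset.sum_le_sum fun m _ => term m
        _ = B * ∑ m ∈ Finset.range N, |v (m+1)| ^ p + B * ∑ m ∈ Finset.range N, conv m ^ p := by
            rw [← Finset.mul_sum, Finset.sum_add_distrib, mul_add]
    have h2 : ∑ m ∈ Finset.range N, conv m ^ p ≤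
        KK * (B * (ε ^ p * ∑ j ∈ Finset.range N, |x j| ^ p + N * C ^ p)) := by
      have := convp18 hp k hk (fun j => |f (x j)|) (fun j => |x j|)
        (fun j => abs_nonneg _) (fun j => abs_nonneg _) ε C hε hC (fun j => hb (x j)) N
      calc ∑ m ∈ Finset.range N, conv m ^ p
          ≤ K ^ (p-1) * K * (B * (ε ^ p * ∑ j ∈ Finset.range N, |x j| ^ p + N * C ^ p)) := this
        _ = KK * (B * (ε ^ p * ∑ j ∈ Finset.range N, |x j| ^ p + N * C ^ p)) := by rw [hKKdef]
    have h3 : ∑ j ∈ Finset.range N, |x j| ^ p ≤ |ξ| ^ p + ∑ m ∈ Finset.range N, |x (m+1)| ^ p := by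
      have hsub1 : ∑ j ∈ Finset.range N, |x j| ^ p ≤ ∑ j ∈ Finset.range (N+1), |x j| ^ p := by
        apply Finset.sum_le_sum_of_subset_of_nonneg (Finset.range_subset_range.mpr (Nat.le_succ N))
        intro j _ _; exact Real.rpow_nonneg (abs_nonneg _) _
      have hsucc : ∑ j ∈ Finset.range (N+1), |x j| ^ p
          = (∑ m ∈ Finset.range N, |x (m+1)| ^ p) + |x 0| ^ p := Finset.sum_range_succ' _ N
      rw [hx0] at hsucc
      linarith [hsub1, hsucc.le, hsucc.ge]
    have h4 : KK * (B * (ε ^ p * ∑ j ∈ Finset.range N, |x j| ^ p + N * C ^ p)) ≤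
        KK * (B * (ε ^ p * (|ξ| ^ p + ∑ m ∈ Finset.range N, |x (m+1)| ^ p) + N * C ^ p)) := by
      apply mul_le_mul_of_nonneg_left _ hKK
      apply mul_le_mul_of_nonneg_left _ hB.le
      have := mul_le_mul_of_nonneg_left h3 (Real.rpow_nonneg hε p)
      linarith
    have h5 : B * ∑ m ∈ Finset.range N, conv m ^ p ≤
        D * (ε ^ p * (|ξ| ^ p + ∑ m ∈ Finset.range N, |x (m+1)| ^ p) + N * C ^ p) := by
      rw [hDdef]
      calc B * ∑ m ∈ Finset.range N, conv m ^ p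
          ≤ B * (KK * (B * (ε ^ p * (|ξ| ^ p + ∑ m ∈ Finset.range N, |x (m+1)| ^ p) + N * C ^ p))) := by
            apply mul_le_mul_of_nonneg_left (le_trans h2 h4) hB.le
        _ = B * (KK * B) * (ε ^ p * (|ξ| ^ p + ∑ m ∈ Finset.range N, |x (m+1)| ^ p) + N * C ^ p) := by
            ring
    linarith
  -- the two termwise inequalities
  have hxle : ∀ m : ℕ, |x (m+1)| ≤ |H (m+1)| + conv m := by
    intro m
    rw [hx m]
    exact le_trans (abs_add_le _ _) (by linarith [hR m])
  have hHle : ∀ m : ℕ, |H (m+1)| ≤ |x (m+1)| + conv m := by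
    intro m
    have : H (m+1) = x (m+1) - ∑ j ∈ Finset.range (m+1), k (m - j) * f (x j) := by
      rw [hx m]; ring
    rw [this]
    exact le_trans (abs_sub _ _) (by linarith [hR m, abs_abs (x (m+1))])
  -- translate the limsup statements
  have e1 := limsup_iff_linear18 (fun n => ∑ j ∈ Finset.Icc 1 n, |H j| ^ p) (hnn H) (hmono H)
  have e2 := limsup_iff_linear18 (fun n => ∑ j ∈ Finset.Icc 1 n, |x j| ^ p) (hnn x) (hmono x)
  refine Iff.trans e1 (Iff.trans ?_ e2.symm)
  constructor
  · -- H bound → x bound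
    rintro ⟨M, hM, hMb⟩
    set ε : ℝ := ((2*D+1)⁻¹) ^ (p⁻¹) with hε
    have hden : (0:ℝ) < 2*D+1 := by linarith
    have hεpos : 0 < ε := Real.rpow_pos_of_pos (inv_pos.mpr hden) _
    have hεp : ε ^ p = (2*D+1)⁻¹ := by
      rw [hε, ← Real.rpow_mul (inv_pos.mpr hden).le, inv_mul_cancel₀ hp0.ne', Real.rpow_one]
    have hhalf : D * ε ^ p ≤ 1/2 := by
      rw [hεp, ← div_eq_mul_inv, div_le_iff₀ hden]; linarith
    obtain ⟨C, hC, hb⟩ := sublin18 hf hsub ε hεpos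
    have hCp : (0:ℝ) ≤ C ^ p := Real.rpow_nonneg hC _
    have hξp : (0:ℝ) ≤ |ξ| ^ p := Real.rpow_nonneg (abs_nonneg _) _
    set M' : ℝ := 2*B*M + 2*D*C^p + 2*B*M + |ξ|^p + 1 with hM'
    have hM'0 : 0 ≤ M' := by positivity
    refine ⟨M', hM'0, fun n => ?_⟩
    have hkey := key x H hxle ε C hεpos.le hC hb n
    simp only [hshift]
    have hSnn0 : (0:ℝ) ≤ ∑ m ∈ Finset.range n, |x (m+1)| ^ p :=
      Finset.sum_nonneg fun m _ => Real.rpow_nonneg (abs_nonneg _) _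
    have hTM0 : ∑ m ∈ Finset.range n, |H (m+1)| ^ p ≤ M * n + M := by
      have := hMb n
      simp only [hshift] at this
      exact this
    set S : ℝ := ∑ m ∈ Finset.range n, |x (m+1)| ^ p with hS
    set T : ℝ := ∑ m ∈ Finset.range n, |H (m+1)| ^ p with hT
    clear_value S T
    clear_value K B KK D ε M'
    -- from hkey : S ≤ B*T + D*(ε^p*(|ξ|^p + S) + n*C^p)
    have h6 : D * (ε^p * (|ξ|^p + S)) ≤ (1/2) * (|ξ|^p + S) := by
      have h7 : 0 ≤ |ξ|^p + S := by linarith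
      calc D * (ε^p * (|ξ|^p + S)) = (D * ε^p) * (|ξ|^p + S) := by ring
        _ ≤ (1/2) * (|ξ|^p + S) := mul_le_mul_of_nonneg_right hhalf h7
    have hNnn : (0:ℝ) ≤ (n:ℝ) := Nat.cast_nonneg n
    have hd : D * (ε^p * (|ξ|^p + S) + n * C^p) = D * (ε^p * (|ξ|^p + S)) + D * (n * C^p) := by
      ring
    have h8 : S ≤ B*T + (1/2)*(|ξ|^p + S) + D * (n * C^p) := by linarith [hkey, hd, h6]
    have hBT : B * T ≤ B * (M*n+M) := mul_le_mul_of_nonneg_left hTM0 hB.le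
    have h9 : S ≤ 2*(B*(M*n+M)) + |ξ|^p + 2*(D * (n * C^p)) := by linarith [h8, hBT]
    have h10 : (2*(B*M) + 2*(D*C^p)) * n ≤ M' * n := by
      apply mul_le_mul_of_nonneg_right _ hNnn
      linarith [hM', mul_nonneg hB.le hM, hξp]
    have he1 : 2*(B*(M*n+M)) = 2*(B*M)*n + 2*(B*M) := by ring
    have he2 : 2*(D * (n * C^p)) = 2*(D*C^p)*n := by ring
    have he3 : (2*(B*M) + 2*(D*C^p)) * n = 2*(B*M)*n + 2*(D*C^p)*n := by ring
    have hBM : 0 ≤ B*M := mul_nonneg hB.le hM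
    have hDC : 0 ≤ D*C^p := mul_nonneg hD hCp
    linarith [h9, h10, hM', he1, he2, he3, hBM, hDC]
  · -- x bound → H bound
    rintro ⟨M, hM, hMb⟩
    obtain ⟨C, hC, hb⟩ := sublin18 hf hsub 1 one_pos
    have h1p : (1:ℝ) ^ p = 1 := Real.one_rpow p
    have hCp : (0:ℝ) ≤ C ^ p := Real.rpow_nonneg hC _
    have hξp : (0:ℝ) ≤ |ξ| ^ p := Real.rpow_nonneg (abs_nonneg _) _
    set M' : ℝ := (B+D)*M + D*C^p + (B+D)*M + D*|ξ|^p + 1 with hM'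
    have hM'0 : 0 ≤ M' := by positivity
    refine ⟨M', hM'0, fun n => ?_⟩
    have hkey := key H x hHle 1 C zero_le_one hC hb n
    rw [h1p] at hkey
    simp only [hshift]
    have hSnn0 : (0:ℝ) ≤ ∑ m ∈ Finset.range n, |x (m+1)| ^ p :=
      Finset.sum_nonneg fun m _ => Real.rpow_nonneg (abs_nonneg _) _
    have hSM0 : ∑ m ∈ Finset.range n, |x (m+1)| ^ p ≤ M * n + M := by
      have := hMb n
      simp only [hshift] at this
      exact this
    set S : ℝ := ∑ m ∈ Finset.range n, |x (m+1)| ^ p with hS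
    set T : ℝ := ∑ m ∈ Finset.range n, |H (m+1)| ^ p with hT
    clear_value S T
    clear_value K B KK D M'
    have hNnn : (0:ℝ) ≤ (n:ℝ) := Nat.cast_nonneg n
    -- hkey : T ≤ B*S + D*(1*(|ξ|^p + S) + n*C^p)
    have hd : D * (1 * (|ξ|^p + S) + n * C^p) = D*|ξ|^p + D*S + D*C^p*n := by ring
    have hBS : B * S ≤ B * (M*n+M) := mul_le_mul_of_nonneg_left hSM0 hB.le
    have hDS : D * S ≤ D * (M*n+M) := mul_le_mul_of_nonneg_left hSM0 hD
    have h9 : T ≤ B*(M*n+M) + D*(M*n+M) + D*|ξ|^p + D*C^p*n := by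
      linarith [hkey, hd, hBS, hDS]
    have h10 : ((B+D)*M + D*C^p) * n ≤ M' * n := by
      apply mul_le_mul_of_nonneg_right _ hNnn
      linarith [hM', mul_nonneg (add_nonneg hB.le hD) hM, mul_nonneg hD hξp]
    have he1 : B*(M*n+M) + D*(M*n+M) = (B+D)*M*n + (B+D)*M := by ring
    have he3 : ((B+D)*M + D*C^p) * n = (B+D)*M*n + D*C^p*n := by ring
    have hBDM : 0 ≤ (B+D)*M := mul_nonneg (add_nonneg hB.le hD) hM
    have hDC : 0 ≤ D*C^p := mul_nonneg hD hCp
    have hDξ : 0 ≤ D*|ξ|^p := mul_nonneg hD hξp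
    linarith [h9, h10, hM', he1, he3, hBDM, hDC, hDξ]
end

section
/- Under the Volterra equation hypotheses, let φ : [0,∞) → [0,∞) be increasing and convex. If there exists η > 0 such that limsup_{n→∞} (1/n) ∑_{j=1}^{n} φ((1+η)|H(j)|) < ∞, then limsup_{n→∞} (1/n) ∑_{j=0}^{n} φ(|x(j)|) < ∞. -/
open Filter Finset Topology

lemma f_bound (f : ℝ → ℝ) (hf : Continuous f)
    (hsub : Filter.Tendsto (fun y => f y / y) (Filter.cocompact ℝ) (nhds 0))
    (ε : ℝ) (hε : 0 < ε) : ∃ C : ℝ, 0 ≤ C ∧ ∀ y, |f y| ≤ ε * |y| + C := by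
  have h := hsub.eventually (Metric.ball_mem_nhds (0:ℝ) hε)
  rw [Filter.eventually_iff, Filter.mem_cocompact] at h
  obtain ⟨K, hK, hKs⟩ := h
  obtain ⟨R, hR⟩ := hK.isBounded.subset_closedBall 0
  set R' := max R 0 with hR'
  have hcomp : IsCompact (Metric.closedBall (0:ℝ) R') := isCompact_closedBall _ _
  obtain ⟨C₀, hC₀⟩ := hcomp.exists_bound_of_continuousOn hf.continuousOn
  refine ⟨max C₀ 0, le_max_right _ _, fun y => ?_⟩
  by_cases hy : |y| ≤ R'
  · have : ‖f y‖ ≤ C₀ := hC₀ y (by simpa [Real.closedBall_eq_Icc, abs_le] using hy)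
    have h1 : |f y| ≤ max C₀ 0 := le_trans (by simpa using this) (le_max_left _ _)
    nlinarith [abs_nonneg y, mul_nonneg hε.le (abs_nonneg y)]
  · push_neg at hy
    have hy0 : y ≠ 0 := by
      intro h0; rw [h0] at hy; simp at hy; exact absurd hy (not_lt.mpr (le_max_right R 0))
    have hyK : y ∉ K := by
      intro hyK
      have := hR hyK
      rw [Metric.mem_closedBall, Real.dist_eq, sub_zero] at this
      exact absurd (le_trans this (le_max_left R 0)) (not_le.mpr hy)
    have := hKs hyK
    simp only [Set.mem_setOf_eq, Real.dist_eq, sub_zero] at this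
    have h2 : |f y| / |y| < ε := by rwa [abs_div] at this
    have h3 : |f y| < ε * |y| := by
      rw [div_lt_iff₀ (abs_pos.mpr hy0)] at h2; linarith [h2]
    nlinarith [le_max_right C₀ 0]

lemma sub_jensen (φ : ℝ → ℝ) (hφconv : ConvexOn ℝ (Set.Ici (0:ℝ)) φ)
    (n : ℕ) (w z : ℕ → ℝ)
    (hw : ∀ j ∈ Finset.range (n+1), 0 ≤ w j)
    (hw1 : ∑ j ∈ Finset.range (n+1), w j ≤ 1)
    (hz : ∀ j ∈ Finset.range (n+1), 0 ≤ z j)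
    (hφ0 : 0 ≤ φ 0) :
    φ (∑ j ∈ Finset.range (n+1), w j * z j)
      ≤ (∑ j ∈ Finset.range (n+1), w j * φ (z j)) + φ 0 := by
  set w' : ℕ → ℝ := fun j => if j = n+1 then 1 - ∑ i ∈ Finset.range (n+1), w i else w j with hw'
  set z' : ℕ → ℝ := fun j => if j = n+1 then 0 else z j with hz'
  have hnot : (n+1) ∉ Finset.range (n+1) := by simp
  have key := hφconv.map_sum_le (t := insert (n+1) (Finset.range (n+1))) (w := w') (p := z')
    (fun i hi => ?_) ?_ (fun i hi => ?_)
  · rw [Finset.sum_insert hnot, Finset.sum_insert hnot] at key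
    have e1 : ∀ j ∈ Finset.range (n+1), w' j • z' j = w j * z j := by
      intro j hj
      have : j ≠ n+1 := by intro h; rw [h] at hj; exact hnot hj
      simp [hw', hz', this]
    have e2 : ∀ j ∈ Finset.range (n+1), w' j • φ (z' j) = w j * φ (z j) := by
      intro j hj
      have : j ≠ n+1 := by intro h; rw [h] at hj; exact hnot hj
      simp [hw', hz', this]
    rw [Finset.sum_congr rfl e1, Finset.sum_congr rfl e2] at key
    simp only [hw', hz', if_pos rfl, smul_eq_mul, mul_zero, zero_add] at key
    have : (1 - ∑ i ∈ Finset.range (n+1), w i) * φ 0 ≤ φ 0 := by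
      nlinarith [Finset.sum_nonneg hw]
    linarith
  · rcases Finset.mem_insert.mp hi with h | h
    · simp [hw', h]; linarith
    · have : i ≠ n+1 := by intro hh; rw [hh] at h; exact hnot h
      simp only [hw', if_neg this]; exact hw i h
  · rw [Finset.sum_insert hnot]
    have : ∀ j ∈ Finset.range (n+1), w' j = w j := by
      intro j hj
      have : j ≠ n+1 := by intro h; rw [h] at hj; exact hnot hj
      simp [hw', this]
    rw [Finset.sum_congr rfl this]
    simp [hw']
  · rcases Finset.mem_insert.mp hi with h | h
    · simp [hz', h]
    · have : i ≠ n+1 := by intro hh; rw [hh] at h; exact hnot h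
      simp only [hz', if_neg this]
      exact hz i h

theorem stmt19
(f : ℝ → ℝ) (k H x : ℕ → ℝ) (ξ : ℝ)
    (hf : Continuous f)
    (hsub : Filter.Tendsto (fun y => f y / y) (Filter.cocompact ℝ) (nhds 0))
    (hk : Summable (fun j => |k j|))
    (hx0 : x 0 = ξ)
    (hx : ∀ n : ℕ, x (n + 1) = H (n + 1) + ∑ j ∈ Finset.range (n + 1), k (n - j) * f (x j))
    (hkpos : 0 < ∑' j, |k j|)
    (φ : ℝ → ℝ)
    (hφmono : MonotoneOn φ (Set.Ici (0 : ℝ)))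
    (hφconv : ConvexOn ℝ (Set.Ici (0 : ℝ)) φ)
    (hφnn : ∀ y : ℝ, 0 ≤ y → 0 ≤ φ y)
    (hH : ∃ η : ℝ, 0 < η ∧
      Filter.limsup
        (fun n : ℕ => ((1 / (n : ℝ) * ∑ j ∈ Finset.Icc 1 n, φ ((1 + η) * |H j|) : ℝ) : EReal))
        Filter.atTop < ⊤) :
    Filter.limsup
      (fun n : ℕ => ((1 / (n : ℝ) * ∑ j ∈ Finset.range (n + 1), φ (|x j|) : ℝ) : EReal))
      Filter.atTop < ⊤ := by
  obtain ⟨η, hη, hHlim⟩ := hH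
  set κ := ∑' j, |k j| with hκdef
  have hκ : 0 < κ := hkpos
  have h1η : (0:ℝ) < 1 + η := by linarith
  have hη' : η ≠ 0 := hη.ne'
  have hκ' : κ ≠ 0 := hκ.ne'
  have h1η' : (1:ℝ) + η ≠ 0 := h1η.ne'
  set ε := η / (2*(1+η)*κ) with hεdef
  have hε : 0 < ε := div_pos hη (by nlinarith)
  obtain ⟨C, hC0, hfb⟩ := f_bound f hf hsub ε hε
  set c := η / (2*(1+η)) with hcdef
  have hc0 : 0 < c := div_pos hη (by linarith)
  have hc1 : c < 1 := by rw [hcdef, div_lt_one (by linarith)]; linarith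
  set K := 2*(1+η)*C*κ/η with hKdef
  have hK0 : 0 ≤ K := by
    rw [hKdef]
    exact div_nonneg (mul_nonneg (mul_nonneg (by linarith) hC0) hκ.le) hη.le
  have hg : ∀ n, 0 ≤ φ (|x n|) := fun n => hφnn _ (abs_nonneg _)
  have hφ0 : 0 ≤ φ 0 := hφnn 0 le_rfl
  have hksum : ∀ (s : Finset ℕ), ∑ i ∈ s, |k i| ≤ κ :=
    fun s => Summable.sum_le_tsum s (fun i _ => abs_nonneg _) hk
  have hkrev : ∀ n : ℕ, ∑ j ∈ Finset.range (n+1), |k (n - j)| ≤ κ := by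
    intro n
    have h := Finset.sum_range_reflect (fun j => |k j|) (n+1)
    simp only [Nat.add_sub_cancel] at h
    rw [h]
    exact hksum _
  -- pointwise bound (a)
  have hB : ∀ n : ℕ, |x (n+1)| ≤ |H (n+1)| + ε * (∑ j ∈ Finset.range (n+1), |k (n-j)| * |x j|) + C * κ := by
    intro n
    rw [hx n]
    have t1 : |H (n+1) + ∑ j ∈ Finset.range (n+1), k (n-j) * f (x j)|
        ≤ |H (n+1)| + ∑ j ∈ Finset.range (n+1), |k (n-j)| * |f (x j)| := by
      refine (abs_add_le _ _).trans (add_le_add_right ?_ _)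
      refine (Finset.abs_sum_le_sum_abs _ _).trans_eq ?_
      exact Finset.sum_congr rfl fun j _ => abs_mul _ _
    have t2 : ∑ j ∈ Finset.range (n+1), |k (n-j)| * |f (x j)|
        ≤ ε * (∑ j ∈ Finset.range (n+1), |k (n-j)| * |x j|) + C * κ := by
      have s1 : ∑ j ∈ Finset.range (n+1), |k (n-j)| * |f (x j)|
          ≤ ∑ j ∈ Finset.range (n+1), |k (n-j)| * (ε * |x j| + C) :=
        Finset.sum_le_sum fun j _ => mul_le_mul_of_nonneg_left (hfb _) (abs_nonneg _)
      have s2 : ∑ j ∈ Finset.range (n+1), |k (n-j)| * (ε * |x j| + C)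
          = ε * (∑ j ∈ Finset.range (n+1), |k (n-j)| * |x j|)
            + C * (∑ j ∈ Finset.range (n+1), |k (n-j)|) := by
        rw [Finset.mul_sum, Finset.mul_sum, ← Finset.sum_add_distrib]
        exact Finset.sum_congr rfl fun j _ => by ring
      have s3 : C * (∑ j ∈ Finset.range (n+1), |k (n-j)|) ≤ C * κ :=
        mul_le_mul_of_nonneg_left (hkrev n) hC0
      linarith
    linarith
  -- pointwise key inequality
  have key : ∀ n : ℕ, φ (|x (n+1)|) ≤ (1/(1+η)) * φ ((1+η)*|H (n+1)|)
      + c * (∑ j ∈ Finset.range (n+1), (|k (n-j)|/κ) * φ (|x j|)) + c * φ 0 + c * φ K := by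
    intro n
    set B := ∑ j ∈ Finset.range (n+1), |k (n-j)| * |x j| with hBdef
    have hB0 : 0 ≤ B := Finset.sum_nonneg fun j _ => mul_nonneg (abs_nonneg _) (abs_nonneg _)
    have hRHS0 : (0:ℝ) ≤ |H (n+1)| + ε * B + C * κ :=
      add_nonneg (add_nonneg (abs_nonneg _) (mul_nonneg hε.le hB0)) (mul_nonneg hC0 hκ.le)
    have s1 : φ (|x (n+1)|) ≤ φ (|H (n+1)| + ε * B + C * κ) :=
      hφmono (Set.mem_Ici.mpr (abs_nonneg _)) (Set.mem_Ici.mpr hRHS0) (hB n)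
    set v := ((1+η)/η) * (ε * B + C * κ) with hvdef
    have hv0 : 0 ≤ v := by
      rw [hvdef]
      exact mul_nonneg (div_nonneg (by linarith) hη.le)
        (add_nonneg (mul_nonneg hε.le hB0) (mul_nonneg hC0 hκ.le))
    have s2 : φ (|H (n+1)| + ε * B + C * κ)
        ≤ (1/(1+η)) * φ ((1+η)*|H (n+1)|) + (η/(1+η)) * φ v := by
      have h2 := hφconv.2 (Set.mem_Ici.mpr (mul_nonneg h1η.le (abs_nonneg (H (n+1)))))
        (Set.mem_Ici.mpr hv0) (one_div_nonneg.mpr h1η.le) (div_nonneg hη.le h1η.le)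
        (by field_simp)
      have heq1 : |H (n+1)| + ε * B + C * κ
          = (1/(1+η)) * ((1+η)*|H (n+1)|) + (η/(1+η)) * v := by
        rw [hvdef]
        field_simp
        ring
      rw [heq1]
      simpa using h2
    have s3 : φ v ≤ (1/2) * φ (B/κ) + (1/2) * φ K := by
      have h3 := hφconv.2 (Set.mem_Ici.mpr (div_nonneg hB0 hκ.le))
        (Set.mem_Ici.mpr hK0) (by norm_num : (0:ℝ) ≤ 1/2) (by norm_num : (0:ℝ) ≤ 1/2)
        (by norm_num)
      have heq2 : v = (1/2) * (B/κ) + (1/2) * K := by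
        rw [hvdef, hεdef, hKdef]
        field_simp
      rw [heq2]
      simpa using h3
    have hBκ : B/κ = ∑ j ∈ Finset.range (n+1), (|k (n-j)|/κ) * |x j| := by
      rw [hBdef, Finset.sum_div]
      exact Finset.sum_congr rfl fun j _ => by ring
    have s4 : φ (B/κ) ≤ (∑ j ∈ Finset.range (n+1), (|k (n-j)|/κ) * φ (|x j|)) + φ 0 := by
      rw [hBκ]
      refine sub_jensen φ hφconv n _ _ (fun j _ => div_nonneg (abs_nonneg _) hκ.le) ?_
        (fun j _ => abs_nonneg _) hφ0
      rw [← Finset.sum_div]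
      exact (div_le_one hκ).mpr (hkrev n)
    have hμ0 : (0:ℝ) ≤ η/(1+η) := div_nonneg hη.le h1η.le
    have m1 : (η/(1+η)) * φ v ≤ (η/(1+η)) * ((1/2) * φ (B/κ) + (1/2) * φ K) :=
      mul_le_mul_of_nonneg_left s3 hμ0
    have m2 : c * φ (B/κ) ≤ c * ((∑ j ∈ Finset.range (n+1), (|k (n-j)|/κ) * φ (|x j|)) + φ 0) :=
      mul_le_mul_of_nonneg_left s4 hc0.le
    have e : ∀ P Q : ℝ, (η/(1+η)) * ((1/2) * P + (1/2) * Q) = c * P + c * Q := by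
      intro P Q; rw [hcdef]; field_simp
    have e1 := e (φ (B/κ)) (φ K)
    have e2 : ∀ P Q R : ℝ, c * (P + Q) = c * P + c * Q := fun P Q R => by ring
    have e2' := e2 (∑ j ∈ Finset.range (n+1), (|k (n-j)|/κ) * φ (|x j|)) (φ 0) 0
    linarith
  -- reindex the H-sum
  have hT : ∀ N : ℕ, ∑ n ∈ Finset.range N, φ ((1+η)*|H (n+1)|)
      = ∑ j ∈ Finset.Icc 1 N, φ ((1+η)*|H j|) := by
    intro N
    rw [← Finset.Ico_add_one_right_eq_Icc, Finset.sum_Ico_eq_sum_range]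
    refine Finset.sum_congr (by norm_num) fun j _ => by rw [Nat.add_comm]
  -- double sum swap bound
  have hswap : ∀ N : ℕ, ∑ n ∈ Finset.range N, ∑ j ∈ Finset.range (n+1), (|k (n-j)|/κ) * φ (|x j|)
      ≤ ∑ j ∈ Finset.range (N+1), φ (|x j|) := by
    intro N
    set F : ℕ → ℕ → ℝ := fun n j => if j ≤ n then (|k (n-j)|/κ) * φ (|x j|) else 0 with hF
    have step1 : ∀ n ∈ Finset.range N, ∑ j ∈ Finset.range (n+1), (|k (n-j)|/κ) * φ (|x j|)
        = ∑ j ∈ Finset.range N, F n j := by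
      intro n hn
      have hnN : n + 1 ≤ N := Finset.mem_range.mp hn
      rw [show (∑ j ∈ Finset.range (n+1), (|k (n-j)|/κ) * φ (|x j|))
          = ∑ j ∈ Finset.range (n+1), F n j from
        Finset.sum_congr rfl fun j hj => by
          simp only [hF]; exact (if_pos (Nat.lt_succ_iff.mp (Finset.mem_range.mp hj))).symm]
      exact Finset.sum_subset (Finset.range_subset_range.mpr hnN)
        (fun j _ hj => by
          simp only [hF]
          exact if_neg (fun h => hj (Finset.mem_range.mpr (Nat.lt_succ_iff.mpr h))))
    rw [Finset.sum_congr rfl step1, Finset.sum_comm]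
    have inner : ∀ j ∈ Finset.range N, ∑ n ∈ Finset.range N, F n j ≤ φ (|x j|) := by
      intro j hj
      have hjN : j < N := Finset.mem_range.mp hj
      have factored : ∀ n, F n j = (if j ≤ n then |k (n-j)|/κ else 0) * φ (|x j|) := by
        intro n
        simp only [hF]
        split_ifs with h
        · rfl
        · rw [zero_mul]
      simp only [factored]
      rw [← Finset.sum_mul]
      have coeff : ∑ n ∈ Finset.range N, (if j ≤ n then |k (n-j)|/κ else 0) ≤ 1 := by
        rw [Finset.range_eq_Ico, ← Finset.sum_Ico_consecutive _ (Nat.zero_le j) hjN.le]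
        have z1 : ∑ n ∈ Finset.Ico 0 j, (if j ≤ n then |k (n-j)|/κ else 0) = 0 :=
          Finset.sum_eq_zero fun n hn =>
            if_neg (by have := (Finset.mem_Ico.mp hn).2; omega)
        have z2 : ∑ n ∈ Finset.Ico j N, (if j ≤ n then |k (n-j)|/κ else 0)
            = ∑ n ∈ Finset.Ico j N, |k (n-j)|/κ :=
          Finset.sum_congr rfl fun n hn => if_pos (Finset.mem_Ico.mp hn).1
        rw [z1, z2, zero_add, Finset.sum_Ico_eq_sum_range]
        simp only [Nat.add_sub_cancel_left]
        rw [← Finset.sum_div]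
        exact (div_le_one hκ).mpr (hksum _)
      calc (∑ n ∈ Finset.range N, (if j ≤ n then |k (n-j)|/κ else 0)) * φ (|x j|)
          ≤ 1 * φ (|x j|) := mul_le_mul_of_nonneg_right coeff (hg j)
        _ = φ (|x j|) := one_mul _
    calc ∑ j ∈ Finset.range N, ∑ n ∈ Finset.range N, F n j
        ≤ ∑ j ∈ Finset.range N, φ (|x j|) := Finset.sum_le_sum inner
      _ ≤ ∑ j ∈ Finset.range (N+1), φ (|x j|) :=
        Finset.sum_le_sum_of_subset_of_nonneg (Finset.range_subset_range.mpr (Nat.le_succ N))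
          (fun j _ _ => hg j)
  -- the main summed estimate
  have hS : ∀ N : ℕ, (1-c) * (∑ j ∈ Finset.range (N+1), φ (|x j|))
      ≤ φ (|x 0|) + (∑ j ∈ Finset.Icc 1 N, φ ((1+η)*|H j|)) + N * (c*φ 0 + c*φ K) := by
    intro N
    have split : ∑ j ∈ Finset.range (N+1), φ (|x j|)
        = (∑ n ∈ Finset.range N, φ (|x (n+1)|)) + φ (|x 0|) :=
      Finset.sum_range_succ' _ N
    have sum_key : ∑ n ∈ Finset.range N, φ (|x (n+1)|)
        ≤ (∑ n ∈ Finset.range N, ((1/(1+η)) * φ ((1+η)*|H (n+1)|)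
            + c * (∑ j ∈ Finset.range (n+1), (|k (n-j)|/κ) * φ (|x j|)) + c * φ 0 + c * φ K)) :=
      Finset.sum_le_sum fun n _ => key n
    have expand : ∑ n ∈ Finset.range N, ((1/(1+η)) * φ ((1+η)*|H (n+1)|)
            + c * (∑ j ∈ Finset.range (n+1), (|k (n-j)|/κ) * φ (|x j|)) + c * φ 0 + c * φ K)
        = (1/(1+η)) * (∑ n ∈ Finset.range N, φ ((1+η)*|H (n+1)|))
          + c * (∑ n ∈ Finset.range N, ∑ j ∈ Finset.range (n+1), (|k (n-j)|/κ) * φ (|x j|))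
          + ((N : ℝ) * (c*φ 0) + (N:ℝ) * (c*φ K)) := by
      rw [Finset.sum_add_distrib, Finset.sum_add_distrib, Finset.sum_add_distrib,
        ← Finset.mul_sum, ← Finset.mul_sum, Finset.sum_const, Finset.sum_const,
        Finset.card_range, nsmul_eq_mul, nsmul_eq_mul]
      ring
    have hHterm : (1/(1+η)) * (∑ n ∈ Finset.range N, φ ((1+η)*|H (n+1)|))
        ≤ ∑ j ∈ Finset.Icc 1 N, φ ((1+η)*|H j|) := by
      rw [hT N]
      have hnn : 0 ≤ ∑ j ∈ Finset.Icc 1 N, φ ((1+η)*|H j|) :=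
        Finset.sum_nonneg fun j _ => hφnn _ (mul_nonneg h1η.le (abs_nonneg _))
      calc (1/(1+η)) * (∑ j ∈ Finset.Icc 1 N, φ ((1+η)*|H j|))
          ≤ 1 * (∑ j ∈ Finset.Icc 1 N, φ ((1+η)*|H j|)) :=
            mul_le_mul_of_nonneg_right (by rw [div_le_one h1η]; linarith) hnn
        _ = _ := one_mul _
    have m3 : c * (∑ n ∈ Finset.range N, ∑ j ∈ Finset.range (n+1), (|k (n-j)|/κ) * φ (|x j|))
        ≤ c * (∑ j ∈ Finset.range (N+1), φ (|x j|)) :=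
      mul_le_mul_of_nonneg_left (hswap N) hc0.le
    rw [expand] at sum_key
    have ering : (1-c) * (∑ j ∈ Finset.range (N+1), φ (|x j|))
        = (∑ j ∈ Finset.range (N+1), φ (|x j|))
          - c * (∑ j ∈ Finset.range (N+1), φ (|x j|)) := by ring
    have ering2 : (N:ℝ) * (c*φ 0 + c*φ K) = (N:ℝ) * (c*φ 0) + (N:ℝ) * (c*φ K) := by ring
    linarith
  -- final limsup argument
  obtain ⟨b, hb1, -⟩ := EReal.lt_iff_exists_real_btwn.mp hHlim
  have hev := Filter.eventually_lt_of_limsup_lt hb1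
  set D := c*φ 0 + c*φ K with hDdef
  have hD0 : 0 ≤ D := by
    rw [hDdef]
    exact add_nonneg (mul_nonneg hc0.le hφ0) (mul_nonneg hc0.le (hφnn K hK0))
  set M : ℝ := (φ (|x 0|) + b + D)/(1-c) with hMdef
  have hub : ∀ᶠ n : ℕ in atTop,
      ((1 / (n : ℝ) * ∑ j ∈ Finset.range (n + 1), φ (|x j|) : ℝ) : EReal) ≤ (M : EReal) := by
    filter_upwards [hev, Filter.eventually_ge_atTop 1] with n h1 h2
    have hn1 : (1:ℝ) ≤ n := by exact_mod_cast h2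
    have hn0 : (0:ℝ) < n := by linarith
    have hTb : 1/(n:ℝ) * ∑ j ∈ Finset.Icc 1 n, φ ((1+η)*|H j|) < b := by
      exact_mod_cast h1
    have hSn := hS n
    have hg00 : 0 ≤ φ (|x 0|) := hg 0
    have step : (1-c) * (1/(n:ℝ) * ∑ j ∈ Finset.range (n+1), φ (|x j|))
        ≤ φ (|x 0|) * (1/n) + (1/(n:ℝ)) * (∑ j ∈ Finset.Icc 1 n, φ ((1+η)*|H j|)) + D := by
      have hrec : (0:ℝ) ≤ 1/n := by positivity
      have h5 := mul_le_mul_of_nonneg_left hSn hrec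
      calc (1-c) * (1/(n:ℝ) * ∑ j ∈ Finset.range (n+1), φ (|x j|))
          = (1/(n:ℝ)) * ((1-c) * ∑ j ∈ Finset.range (n+1), φ (|x j|)) := by ring
        _ ≤ (1/(n:ℝ)) * (φ (|x 0|) + (∑ j ∈ Finset.Icc 1 n, φ ((1+η)*|H j|)) + n * D) := h5
        _ = φ (|x 0|) * (1/n) + (1/(n:ℝ)) * (∑ j ∈ Finset.Icc 1 n, φ ((1+η)*|H j|))
            + (1/n) * ((n:ℝ) * D) := by ring
        _ = φ (|x 0|) * (1/n) + (1/(n:ℝ)) * (∑ j ∈ Finset.Icc 1 n, φ ((1+η)*|H j|)) + D := by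
            rw [show (1/(n:ℝ)) * ((n:ℝ) * D) = D by field_simp]
    have hfrac : φ (|x 0|) * (1/(n:ℝ)) ≤ φ (|x 0|) :=
      mul_le_of_le_one_right hg00 (by rw [div_le_one hn0]; exact hn1)
    have final : 1/(n:ℝ) * ∑ j ∈ Finset.range (n+1), φ (|x j|) ≤ M := by
      rw [hMdef, le_div_iff₀ (by linarith : (0:ℝ) < 1-c)]
      nlinarith [step, hfrac, hTb]
    exact_mod_cast final
  have hle := Filter.limsup_le_of_le (by isBoundedDefault) hub
  exact lt_of_le_of_lt hle (EReal.coe_lt_top M)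
end
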